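/- arXiv:1703.02199 — 6 statements merged into one kernel-verified Lean document; each statement's English description precedes it below -/
import Mathlib

section
/- Let (T,g) be a closure pair for a based space (𝕋,t₀). If f : (X,x₀) → (Y,y₀) is a continuous map of based topological spaces and H is a subgroup of π₁(X,x₀), then f_#(cl_{T,g}(H)) ≤ cl_{T,g}(f_#(H)), where the first closure is taken in π₁(X,x₀) and the second in π₁(Y,y₀). -/
open CategoryTheory

noncomputable section

universe u

attribute [local instance] Path.Homotopic.setoid

/-- The element of the fundamental group determined by a loop. -/
def loopClass {X : Type u} [TopologicalSpace X] {x : X} (γ : Path x x) :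
    FundamentalGroup X x :=
  FundamentalGroup.fromPath (X := TopCat.of X) ⟦γ⟧

/-- The homomorphism on fundamental groups induced by a based continuous map. -/
def inducedHom {X Y : Type u} [TopologicalSpace X] [TopologicalSpace Y]
    (f : C(X, Y)) (x : X) {y : Y} (h : f x = y) :
    FundamentalGroup X x →* FundamentalGroup Y y := by
  subst h
  exact (FundamentalGroupoid.fundamentalGroupoidFunctor.map
    (X := TopCat.of X) (Y := TopCat.of Y) (TopCat.ofHom f)).mapEnd ⟨x⟩

/-- Change of basepoint along a path, as an isomorphism of fundamental groups. -/
def pathConjEquiv {X : Type u} [TopologicalSpace X] {x y : X} (α : Path x y) :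
    FundamentalGroup X x ≃* FundamentalGroup X y :=
  FundamentalGroup.fundamentalGroupMulEquivOfPath α

/-- The path-conjugate subgroup `H^α = [α⁻]·H·[α]` of `π₁(X, α 1)`. -/
def conjSubgroup {X : Type u} [TopologicalSpace X] {x y : X} (α : Path x y)
    (H : Subgroup (FundamentalGroup X x)) : Subgroup (FundamentalGroup X y) :=
  H.map (pathConjEquiv α).toMonoidHom

/-- A subgroup `H ≤ π₁(X,x₀)` is `(T,g)`-closed for the closure pair `(T,g)` on the
based test space `(𝕋,t₀)` if for every continuous map `f : 𝕋 → X` with `f t₀ = x₀`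
and `f#(T) ≤ H` one has `f#(g) ∈ H`. -/
def IsTGClosed {T : Type u} [TopologicalSpace T] (t₀ : T)
    (Tsub : Subgroup (FundamentalGroup T t₀)) (g : FundamentalGroup T t₀)
    {X : Type u} [TopologicalSpace X] (x₀ : X)
    (H : Subgroup (FundamentalGroup X x₀)) : Prop :=
  ∀ (f : C(T, X)) (hf : f t₀ = x₀),
    Subgroup.map (inducedHom f t₀ hf) Tsub ≤ H → inducedHom f t₀ hf g ∈ H

/-- The `(T,g)`-closure of a subgroup `H ≤ π₁(X,x₀)`: the intersection of all
`(T,g)`-closed subgroups of `π₁(X,x₀)` containing `H`. -/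
def tgClosure {T : Type u} [TopologicalSpace T] (t₀ : T)
    (Tsub : Subgroup (FundamentalGroup T t₀)) (g : FundamentalGroup T t₀)
    {X : Type u} [TopologicalSpace X] (x₀ : X)
    (H : Subgroup (FundamentalGroup X x₀)) : Subgroup (FundamentalGroup X x₀) :=
  sInf {K : Subgroup (FundamentalGroup X x₀) | IsTGClosed t₀ Tsub g x₀ K ∧ H ≤ K}

lemma inducedHom_comp {T X Y : Type u} [TopologicalSpace T] [TopologicalSpace X]
    [TopologicalSpace Y] (φ : C(T, X)) (f : C(X, Y)) (t₀ : T) {x₀ : X} {y₀ : Y}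
    (hφ : φ t₀ = x₀) (hf : f x₀ = y₀) (a : FundamentalGroup T t₀) :
    inducedHom f x₀ hf (inducedHom φ t₀ hφ a) =
      inducedHom (f.comp φ) t₀ (by rw [ContinuousMap.comp_apply, hφ, hf]) a := by
  subst hφ; subst hf
  show (FundamentalGroupoid.fundamentalGroupoidFunctor.map (X := TopCat.of X)
      (Y := TopCat.of Y) (TopCat.ofHom f)).map
      ((FundamentalGroupoid.fundamentalGroupoidFunctor.map (X := TopCat.of T)
        (Y := TopCat.of X) (TopCat.ofHom φ)).map a) =
    (FundamentalGroupoid.fundamentalGroupoidFunctor.map (X := TopCat.of T)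
      (Y := TopCat.of Y) (TopCat.ofHom (f.comp φ))).map a
  obtain ⟨p, hp⟩ := Quotient.exists_rep a
  rw [← hp]
  rfl

theorem stmt0 {T : Type u} [TopologicalSpace T] (t₀ : T)
    (Tsub : Subgroup (FundamentalGroup T t₀)) (g : FundamentalGroup T t₀)
    {X Y : Type u} [TopologicalSpace X] [TopologicalSpace Y]
    (f : C(X, Y)) (x₀ : X) (y₀ : Y) (hf : f x₀ = y₀)
    (H : Subgroup (FundamentalGroup X x₀)) :
    Subgroup.map (inducedHom f x₀ hf) (tgClosure t₀ Tsub g x₀ H) ≤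
      tgClosure t₀ Tsub g y₀ (Subgroup.map (inducedHom f x₀ hf) H) := by
  rw [Subgroup.map_le_iff_le_comap]
  intro a ha
  rw [Subgroup.mem_comap]
  rw [tgClosure, Subgroup.mem_sInf]
  intro K hK
  obtain ⟨hKclosed, hKle⟩ := hK
  have hcomap : IsTGClosed t₀ Tsub g x₀ (K.comap (inducedHom f x₀ hf)) ∧
      H ≤ K.comap (inducedHom f x₀ hf) := by
    constructor
    · intro φ hφ hle
      rw [Subgroup.mem_comap, inducedHom_comp φ f t₀ hφ hf]
      apply hKclosed (f.comp φ) _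
      intro b hb
      obtain ⟨c, hc, rfl⟩ := hb
      rw [← inducedHom_comp φ f t₀ hφ hf]
      exact Subgroup.mem_comap.mp (hle ⟨c, hc, rfl⟩)
    · rw [← Subgroup.map_le_iff_le_comap]
      exact hKle
  exact Subgroup.mem_comap.mp (Subgroup.mem_sInf.mp ha _ hcomap)
end
end

section
/- Let (T,g) be a closure pair for a based space (𝕋,t₀) and (T',g') a closure pair for a based space (𝕋',t₀'). The following are equivalent: (1) g' ∈ cl_{T,g}(T'), the (T,g)-closure of T' in π₁(𝕋',t₀'); (2) for every based space (X,x₀) and every subgroup H ≤ π₁(X,x₀), if H is (T,g)-closed then H is (T',g')-closed; (3) for every based space (X,x₀) and every subgroup H ≤ π₁(X,x₀), cl_{T',g'}(H) ≤ cl_{T,g}(H). -/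
open CategoryTheory

noncomputable section

universe u

attribute [local instance] Path.Homotopic.setoid

lemma mapFn_id {X : Type u} [TopologicalSpace X] {x₀ x₁ : X}
    (p : Path.Homotopic.Quotient x₀ x₁) :
    p.map (ContinuousMap.id X) = p := by
  induction p using Quotient.inductionOn with
  | h q =>
    rfl

lemma mapFn_comp {X Y Z : Type u} [TopologicalSpace X] [TopologicalSpace Y] [TopologicalSpace Z]
    {x₀ x₁ : X} (p : Path.Homotopic.Quotient x₀ x₁) (f : C(X, Y)) (g : C(Y, Z)) :
    (p.map f).map g = p.map (g.comp f) := by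
  induction p using Quotient.inductionOn with
  | h q =>
    rfl

lemma inducedHom_id_apply {X : Type u} [TopologicalSpace X] (x : X)
    (h : (ContinuousMap.id X) x = x) (a : FundamentalGroup X x) :
    inducedHom (ContinuousMap.id X) x h a = a :=
  mapFn_id a

lemma inducedHom_comp_apply {X Y Z : Type u}
    [TopologicalSpace X] [TopologicalSpace Y] [TopologicalSpace Z]
    (f : C(X, Y)) (g : C(Y, Z)) (x : X) {y : Y} {z : Z}
    (hf : f x = y) (hg : g y = z) (h : (g.comp f) x = z) (a : FundamentalGroup X x) :
    inducedHom g y hg (inducedHom f x hf a)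
      = inducedHom (g.comp f) x h a := by
  subst hf; subst hg
  exact mapFn_comp a f g

lemma le_tgClosure' {T : Type u} [TopologicalSpace T] (t₀ : T)
    (Tsub : Subgroup (FundamentalGroup T t₀)) (g : FundamentalGroup T t₀)
    {X : Type u} [TopologicalSpace X] (x₀ : X)
    (H : Subgroup (FundamentalGroup X x₀)) :
    H ≤ tgClosure t₀ Tsub g x₀ H :=
  le_sInf fun _ hK => hK.2

lemma isTGClosed_tgClosure' {T : Type u} [TopologicalSpace T] (t₀ : T)
    (Tsub : Subgroup (FundamentalGroup T t₀)) (g : FundamentalGroup T t₀)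
    {X : Type u} [TopologicalSpace X] (x₀ : X)
    (H : Subgroup (FundamentalGroup X x₀)) :
    IsTGClosed t₀ Tsub g x₀ (tgClosure t₀ Tsub g x₀ H) := by
  intro f hf hsub
  rw [tgClosure, Subgroup.mem_sInf]
  intro K hK
  exact hK.1 f hf (hsub.trans (sInf_le hK))

theorem stmt1 {T : Type u} [TopologicalSpace T] (t₀ : T)
    (Tsub : Subgroup (FundamentalGroup T t₀)) (g : FundamentalGroup T t₀)
    {T' : Type u} [TopologicalSpace T'] (t₀' : T')
    (Tsub' : Subgroup (FundamentalGroup T' t₀')) (g' : FundamentalGroup T' t₀') :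
    List.TFAE
      [ g' ∈ tgClosure t₀ Tsub g t₀' Tsub',
        ∀ (X : Type u) [TopologicalSpace X] (x₀ : X)
          (H : Subgroup (FundamentalGroup X x₀)),
          IsTGClosed t₀ Tsub g x₀ H → IsTGClosed t₀' Tsub' g' x₀ H,
        ∀ (X : Type u) [TopologicalSpace X] (x₀ : X)
          (H : Subgroup (FundamentalGroup X x₀)),
          tgClosure t₀' Tsub' g' x₀ H ≤ tgClosure t₀ Tsub g x₀ H ] := by
  tfae_have 1 → 2
  · intro h1 X _ x₀ H hH f hf hsub
    set F := inducedHom f t₀' hf with hF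
    have hK : IsTGClosed t₀ Tsub g t₀' (H.comap F) := by
      intro φ hφ hsubφ
      have hcomp : (f.comp φ) t₀ = x₀ := by
        rw [ContinuousMap.comp_apply, hφ, hf]
      have hmap : Subgroup.map (inducedHom (f.comp φ) t₀ hcomp) Tsub ≤ H := by
        rintro a ⟨b, hb, rfl⟩
        rw [← inducedHom_comp_apply φ f t₀ hφ hf hcomp b]
        exact hsubφ ⟨b, hb, rfl⟩
      have := hH (f.comp φ) hcomp hmap
      rw [← inducedHom_comp_apply φ f t₀ hφ hf hcomp g] at this
      exact this
    have hTsub' : Tsub' ≤ H.comap F := by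
      rintro b hb
      exact hsub ⟨b, hb, rfl⟩
    have : g' ∈ H.comap F := by
      have := h1
      rw [tgClosure, Subgroup.mem_sInf] at this
      exact this (H.comap F) ⟨hK, hTsub'⟩
    exact this
  tfae_have 2 → 3
  · intro h2 X _ x₀ H
    apply sInf_le
    exact ⟨h2 X x₀ _ (isTGClosed_tgClosure' t₀ Tsub g x₀ H), le_tgClosure' t₀ Tsub g x₀ H⟩
  tfae_have 3 → 1
  · intro h3
    apply h3 T' t₀' Tsub'
    rw [tgClosure, Subgroup.mem_sInf]
    rintro K ⟨hK, hle⟩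
    have hmap : Subgroup.map (inducedHom (ContinuousMap.id T') t₀' rfl) Tsub' ≤ K := by
      rintro a ⟨b, hb, rfl⟩
      have h0 : inducedHom (ContinuousMap.id T') t₀' rfl b = b := inducedHom_id_apply t₀' rfl b
      rw [h0]; exact hle hb
    have := hK (ContinuousMap.id T') rfl hmap
    have h0 : inducedHom (ContinuousMap.id T') t₀' rfl g' = g' := inducedHom_id_apply t₀' rfl g'
    rw [← h0]; exact this
  tfae_finish
end
end

section
/- If (T,g) is a normal closure pair for a based space (𝕋,t₀), then the closure operator cl_{T,g} commutes with path conjugation: for every based space (X,x₀), every subgroup H ≤ π₁(X,x₀), and every path α in X with α(0) = x₀, one has cl_{T,g}(H^α) = (cl_{T,g}(H))^α as subgroups of π₁(X,α(1)). -/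
open CategoryTheory

noncomputable section

universe u

attribute [local instance] Path.Homotopic.setoid

/-- A closure pair `(T,g)` is normal if, for every based space `(X,x₀)` and every
subgroup `H ≤ π₁(X,x₀)`, `H` is `(T,g)`-closed if and only if all of its path-conjugates
`H^α` are `(T,g)`-closed. -/
def IsNormalClosurePair {T : Type u} [TopologicalSpace T] (t₀ : T)
    (Tsub : Subgroup (FundamentalGroup T t₀)) (g : FundamentalGroup T t₀) : Prop :=
  ∀ (X : Type u) [TopologicalSpace X] (x₀ : X) (H : Subgroup (FundamentalGroup X x₀)),
    IsTGClosed t₀ Tsub g x₀ H ↔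
      ∀ (x : X) (α : Path x₀ x), IsTGClosed t₀ Tsub g x (conjSubgroup α H)


lemma pathConjEquiv_symm {X : Type u} [TopologicalSpace X] {x y : X} (α : Path x y) :
    pathConjEquiv α.symm = (pathConjEquiv α).symm := by
  ext a
  show ((Groupoid.isoEquivHom _ _).symm ⟦α.symm⟧).conj a = ((Groupoid.isoEquivHom _ _).symm ⟦α⟧).conj.symm a
  have h1 : Groupoid.inv (show FundamentalGroupoid.mk x ⟶ FundamentalGroupoid.mk y from ⟦α⟧)
      = (show FundamentalGroupoid.mk y ⟶ FundamentalGroupoid.mk x from ⟦α.symm⟧) := rfl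
  rw [MulEquiv.eq_symm_apply, Iso.conj_apply, Iso.conj_apply]
  simp [← h1, Groupoid.inv_eq_inv]

lemma conjSubgroup_symm_conjSubgroup {X : Type u} [TopologicalSpace X] {x y : X} (α : Path x y)
    (H : Subgroup (FundamentalGroup X x)) : conjSubgroup α.symm (conjSubgroup α H) = H := by
  rw [conjSubgroup, conjSubgroup, pathConjEquiv_symm,
    Subgroup.map_equiv_eq_comap_symm', MulEquiv.symm_symm]
  exact Subgroup.comap_map_eq_self_of_injective (pathConjEquiv α).injective H

lemma conjSubgroup_conjSubgroup_symm {X : Type u} [TopologicalSpace X] {x y : X} (α : Path x y)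
    (K : Subgroup (FundamentalGroup X y)) : conjSubgroup α (conjSubgroup α.symm K) = K := by
  have := conjSubgroup_symm_conjSubgroup α.symm K
  rwa [Path.symm_symm] at this

lemma conjSubgroup_mono {X : Type u} [TopologicalSpace X] {x y : X} (α : Path x y)
    {H K : Subgroup (FundamentalGroup X x)} (h : H ≤ K) :
    conjSubgroup α H ≤ conjSubgroup α K :=
  Subgroup.map_mono h

/-- `conjSubgroup α` as an order isomorphism on lattices of subgroups. -/
def conjOrderIso {X : Type u} [TopologicalSpace X] {x y : X} (α : Path x y) :
    Subgroup (FundamentalGroup X x) ≃o Subgroup (FundamentalGroup X y) where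
  toFun := conjSubgroup α
  invFun := conjSubgroup α.symm
  left_inv := conjSubgroup_symm_conjSubgroup α
  right_inv := conjSubgroup_conjSubgroup_symm α
  map_rel_iff' := Subgroup.map_le_map_iff_of_injective (pathConjEquiv α).injective

lemma conjSubgroup_sInf {X : Type u} [TopologicalSpace X] {x y : X} (α : Path x y)
    (S : Set (Subgroup (FundamentalGroup X x))) :
    conjSubgroup α (sInf S) = sInf (conjSubgroup α '' S) :=
  map_sInf (conjOrderIso α) S

theorem stmt2 {T : Type u} [TopologicalSpace T] (t₀ : T)
    (Tsub : Subgroup (FundamentalGroup T t₀)) (g : FundamentalGroup T t₀)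
    (hnormal : IsNormalClosurePair t₀ Tsub g)
    {X : Type u} [TopologicalSpace X] (x₀ : X)
    (H : Subgroup (FundamentalGroup X x₀)) (x : X) (α : Path x₀ x) :
    tgClosure t₀ Tsub g x (conjSubgroup α H) =
      conjSubgroup α (tgClosure t₀ Tsub g x₀ H) := by
  have hset : {K | IsTGClosed t₀ Tsub g x K ∧ conjSubgroup α H ≤ K}
      = conjSubgroup α '' {K | IsTGClosed t₀ Tsub g x₀ K ∧ H ≤ K} := by
    ext K
    constructor
    · rintro ⟨hc, hle⟩
      refine ⟨conjSubgroup α.symm K, ⟨(hnormal X x K).mp hc x₀ α.symm, ?_⟩,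
        conjSubgroup_conjSubgroup_symm α K⟩
      have h2 := conjSubgroup_mono α.symm hle
      rwa [conjSubgroup_symm_conjSubgroup] at h2
    · rintro ⟨K₀, ⟨hc, hle⟩, rfl⟩
      exact ⟨(hnormal X x₀ K₀).mp hc x α, conjSubgroup_mono α hle⟩
  rw [tgClosure, tgClosure, hset]
  exact (conjSubgroup_sInf α _).symm
end
end

section
/- Suppose the based space (𝕋,t₀) is well-pointed in the following sense: for every topological space X, every continuous map f : 𝕋 → X, and every path α : [0,1] → X with α(0) = f(t₀), there is a homotopy G : 𝕋 × [0,1] → X with G(d,0) = f(d) for all d ∈ 𝕋 and G(t₀,s) = α(s) for all s ∈ [0,1]. Then every closure pair (T,g) for (𝕋,t₀) is a normal closure pair. -/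
open CategoryTheory

noncomputable section

universe u

attribute [local instance] Path.Homotopic.setoid

/-! ### Auxiliary lemmas -/

lemma pathConjEquiv_refl_apply {X : Type u} [TopologicalSpace X] (x : X)
    (A : FundamentalGroup X x) : pathConjEquiv (Path.refl x) A = A := by
  apply End.ext
  show Groupoid.inv (⟦Path.refl x⟧ : FundamentalGroupoid.mk x ⟶ FundamentalGroupoid.mk x) ≫
    A ≫ ⟦Path.refl x⟧ = A
  have h : (⟦Path.refl x⟧ : FundamentalGroupoid.mk x ⟶ FundamentalGroupoid.mk x) =
      𝟙 (FundamentalGroupoid.mk x) := rfl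
  rw [h]
  simp

lemma pathConjEquiv_symm_apply {X : Type u} [TopologicalSpace X] {x y : X} (α : Path x y)
    (A : FundamentalGroup X x) : pathConjEquiv α.symm (pathConjEquiv α A) = A := by
  apply End.ext
  show Groupoid.inv (⟦α.symm⟧ : FundamentalGroupoid.mk y ⟶ FundamentalGroupoid.mk x) ≫
    (Groupoid.inv (⟦α⟧ : FundamentalGroupoid.mk x ⟶ FundamentalGroupoid.mk y) ≫ A ≫ ⟦α⟧) ≫
    ⟦α.symm⟧ = A
  have gen : ∀ (a : FundamentalGroupoid.mk x ⟶ FundamentalGroupoid.mk y)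
      (s : FundamentalGroupoid.mk y ⟶ FundamentalGroupoid.mk x), a ≫ s = 𝟙 _ →
      Groupoid.inv s ≫ (Groupoid.inv a ≫ A ≫ a) ≫ s = A := by
    intro a s h
    obtain rfl : s = inv a := (IsIso.inv_eq_of_hom_inv_id h).symm
    simp [Groupoid.inv_eq_inv]
  exact gen _ _ (Quotient.sound ⟨(Path.Homotopy.reflTransSymm α).symm⟩)

lemma pathConjEquiv_symm_apply' {X : Type u} [TopologicalSpace X] {x y : X} (α : Path x y)
    (A : FundamentalGroup X y) : pathConjEquiv α (pathConjEquiv α.symm A) = A := by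
  have := pathConjEquiv_symm_apply α.symm A
  rwa [Path.symm_symm] at this

open FundamentalGroupoid FundamentalGroupoidFunctor in
lemma induced_homotopy_conj {T X : Type u} [TopologicalSpace T] [TopologicalSpace X]
    (t₀ : T) {f₀ f₁ : C(T, X)} (H : ContinuousMap.Homotopy f₀ f₁)
    (β : Path (f₀ t₀) (f₁ t₀)) (hβ : ∀ s, H (s, t₀) = β s)
    (γ : FundamentalGroup T t₀) :
    inducedHom f₁ t₀ rfl γ = pathConjEquiv β (inducedHom f₀ t₀ rfl γ) := by
  have hβ' : H.evalAt t₀ = β := by ext s; exact hβ s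
  have key := ((ContinuousMap.Homotopy.eq_diag_path (X := TopCat.of T) (Y := TopCat.of X)
      H (γ : @fromTop (TopCat.of T) t₀ ⟶ fromTop t₀)).1).trans
    ((ContinuousMap.Homotopy.eq_diag_path (X := TopCat.of T) (Y := TopCat.of X)
      H (γ : @fromTop (TopCat.of T) t₀ ⟶ fromTop t₀)).2).symm
  rw [hβ'] at key
  have gen : ∀ {a b : FundamentalGroupoid X} (p : a ⟶ b) (A : a ⟶ a) (B : b ⟶ b),
      A ≫ p = p ≫ B → B = Groupoid.inv p ≫ A ≫ p := by
    intro a b p A B h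
    rw [Groupoid.inv_eq_inv, eq_comm, IsIso.inv_comp_eq, h]
  exact gen _ _ _ key

theorem stmt3 {T : Type u} [TopologicalSpace T] (t₀ : T)
    (hwellpointed : ∀ (X : Type u) [TopologicalSpace X] (f : C(T, X)) (y : X)
      (α : Path (f t₀) y), ∃ G : C(T × unitInterval, X),
        (∀ d : T, G (d, 0) = f d) ∧ (∀ s : unitInterval, G (t₀, s) = α s))
    (Tsub : Subgroup (FundamentalGroup T t₀)) (g : FundamentalGroup T t₀) :
    IsNormalClosurePair t₀ Tsub g := by
  intro X _ x₀ H
  constructor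
  · -- if H is closed, every path-conjugate is closed
    intro hH x α f hf hmap
    subst hf
    obtain ⟨G, hG0, hGs⟩ := hwellpointed X f x₀ α.symm
    set f₁ : C(T, X) := ⟨fun d => G (d, 1), by fun_prop⟩ with hf₁
    have h₁ : f₁ t₀ = x₀ := by
      show G (t₀, 1) = x₀
      rw [hGs 1]
      exact α.symm.target
    subst h₁
    -- the homotopy from f to f₁
    let Htc : C(unitInterval × T, X) :=
      ⟨fun p => G (p.2, p.1), G.continuous.comp (continuous_snd.prodMk continuous_fst)⟩
    let Ht : ContinuousMap.Homotopy f f₁ :=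
      { toContinuousMap := Htc
        map_zero_left := fun d => hG0 d
        map_one_left := fun d => rfl }
    have hβ : ∀ s, Ht (s, t₀) = α.symm s := fun s => hGs s
    have key : ∀ γ, inducedHom f₁ t₀ rfl γ = pathConjEquiv α.symm (inducedHom f t₀ rfl γ) :=
      fun γ => induced_homotopy_conj t₀ Ht α.symm hβ γ
    have hle : Subgroup.map (inducedHom f₁ t₀ rfl) Tsub ≤ H := by
      rintro - ⟨a, ha, rfl⟩
      rw [key a]
      have hmem : inducedHom f t₀ rfl a ∈ conjSubgroup α H :=
        hmap ⟨a, ha, rfl⟩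
      obtain ⟨b, hb, hb'⟩ := hmem
      rw [← hb']
      rw [show (pathConjEquiv α).toMonoidHom b = pathConjEquiv α b from rfl,
        pathConjEquiv_symm_apply]
      exact hb
    have hg := hH f₁ rfl hle
    rw [key g] at hg
    refine ⟨pathConjEquiv α.symm (inducedHom f t₀ rfl g), hg, ?_⟩
    exact pathConjEquiv_symm_apply' α _
  · -- conversely, take the constant path
    intro hcl
    have h := hcl x₀ (Path.refl x₀)
    have hrefl : conjSubgroup (Path.refl x₀) H = H := by
      ext a
      constructor
      · rintro ⟨b, hb, rfl⟩
        rw [show (pathConjEquiv (Path.refl x₀)).toMonoidHom b =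
          pathConjEquiv (Path.refl x₀) b from rfl, pathConjEquiv_refl_apply]
        exact hb
      · intro ha
        exact ⟨a, ha, pathConjEquiv_refl_apply x₀ a⟩
    rwa [hrefl] at h
end
end

section
/- Let X be a path-connected topological space with basepoint x₀. If a subgroup H ≤ π₁(X,x₀) is (P,p_τ)-closed, then H is (C,c_τ)-closed. -/
open CategoryTheory

noncomputable section

universe u

attribute [local instance] Path.Homotopic.setoid

/-- Equality of right cosets `H·a = H·b`. -/
def rightCosetEq {G : Type*} [Group G] (H : Subgroup G) (a b : G) : Prop :=
  (fun h => h * a) '' (H : Set G) = (fun h => h * b) '' (H : Set G)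

/-! ### The Hawaiian earring `ℍ` and the space `ℍ⁺` obtained by attaching a whisker -/

/-- The Hawaiian earring `ℍ ⊆ ℝ²`: the union of the circles of radius `1/n`
centered at `(1/n, 0)` for `n ≥ 1`. -/
def HEset : Set (ℝ × ℝ) :=
  {p | ∃ n : ℕ, 0 < n ∧ (p.1 - 1 / n) ^ 2 + p.2 ^ 2 = (1 / n) ^ 2}

/-- The space `ℍ⁺ = ℍ ∪ ([-1,0] × {0})`. -/
def HEP : Set (ℝ × ℝ) := (Set.Icc (-1 : ℝ) 0 ×ˢ ({0} : Set ℝ)) ∪ HEset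

/-- The basepoint `b₀⁺ = (-1, 0)` of `ℍ⁺`. -/
def bPlus : HEP := ⟨(-1, 0), Or.inl ⟨⟨le_refl _, by norm_num⟩, rfl⟩⟩

/-- The point `b₀ = (0, 0)` of `ℍ⁺`. -/
def bZero : HEP := ⟨(0, 0), Or.inl ⟨⟨by norm_num, le_refl _⟩, rfl⟩⟩

/-- The canonical parametrization of the `n`-th circle of the Hawaiian earring,
starting and ending at the origin and traversing `C_n` counterclockwise. -/
def ellFun (n : ℕ) (t : ℝ) : ℝ × ℝ :=
  ((1 - Real.cos (2 * Real.pi * t)) / n, -Real.sin (2 * Real.pi * t) / n)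

lemma ellFun_mem (n : ℕ) (t : ℝ) : ellFun n t ∈ HEP := by
  rcases Nat.eq_zero_or_pos n with h | h
  · subst h
    refine Or.inr ⟨1, one_pos, ?_⟩
    simp [ellFun]
  · refine Or.inr ⟨n, h, ?_⟩
    have hn : (n : ℝ) ≠ 0 := Nat.cast_ne_zero.mpr h.ne'
    have hs := Real.sin_sq_add_cos_sq (2 * Real.pi * t)
    simp only [ellFun]
    field_simp
    all_goals nlinarith [hs]

/-- The path `ι : [0,1] → ℍ⁺`, `ι(t) = (t - 1, 0)`, from `b₀⁺` to `b₀`. -/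
def iotaPath : Path bPlus bZero where
  toFun t := ⟨((t : ℝ) - 1, 0),
    Or.inl ⟨⟨show (-1 : ℝ) ≤ (t : ℝ) - 1 by linarith [t.2.1],
      show ((t : ℝ) - 1 : ℝ) ≤ 0 by linarith [t.2.2]⟩, rfl⟩⟩
  continuous_toFun := by
    apply Continuous.subtype_mk
    fun_prop
  source' := by
    apply Subtype.ext
    norm_num [bPlus]
  target' := by
    apply Subtype.ext
    norm_num [bZero]

/-- The loop `ℓ_n` traversing the `n`-th circle of `ℍ`, as a loop in `ℍ⁺` based at `b₀`. -/
def ellLoop (n : ℕ) : Path bZero bZero where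
  toFun t := ⟨ellFun n t, ellFun_mem n t⟩
  continuous_toFun := by
    apply Continuous.subtype_mk
    simp only [ellFun]
    fun_prop
  source' := by
    apply Subtype.ext
    norm_num [ellFun, bZero]
  target' := by
    apply Subtype.ext
    norm_num [ellFun, bZero, Real.cos_two_pi, Real.sin_two_pi]

/-- The element `cₙ = [ι · ℓₙ · ι⁻] ∈ π₁(ℍ⁺, b₀⁺)`. -/
def cElem (n : ℕ) : FundamentalGroup HEP bPlus :=
  loopClass ((iotaPath.trans (ellLoop n)).trans iotaPath.symm)

/-- The subgroup `C = ⟨cₙ : n ≥ 1⟩ ≤ π₁(ℍ⁺, b₀⁺)`. -/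
def Csub : Subgroup (FundamentalGroup HEP bPlus) :=
  Subgroup.closure {g | ∃ n : ℕ, 0 < n ∧ g = cElem n}

/-- Specification of the infinite concatenation `ℓ_∞ = ℓ₁·ℓ₂·ℓ₃·⋯` : it equals `ℓ_n`,
affinely reparametrized, on the interval `[(n-1)/n, n/(n+1)]`. -/
def EllInfSpec (ℓ : Path bZero bZero) : Prop :=
  ∀ n : ℕ, 0 < n → ∀ t : unitInterval,
    ((n : ℝ) - 1) / n ≤ (t : ℝ) → (t : ℝ) ≤ (n : ℝ) / (n + 1) →
    (↑(ℓ t) : ℝ × ℝ) = ellFun n (((t : ℝ) - ((n : ℝ) - 1) / n) * (n * (n + 1)))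

/-- The element `c_∞ = [ι · ℓ_∞ · ι⁻] ∈ π₁(ℍ⁺, b₀⁺)`. -/
def cInf (ℓ : Path bZero bZero) : FundamentalGroup HEP bPlus :=
  loopClass ((iotaPath.trans ℓ).trans iotaPath.symm)

/-- The left endpoint of the `k`-th open middle-third interval of level `n` in the
complement of the Cantor set (`n ≥ 1`, `1 ≤ k ≤ 2^(n-1)`, intervals of length `3⁻ⁿ`,
indexed in their natural order in `[0,1]`). -/
def cantorLeft (n k : ℕ) : ℝ :=
  (∑ j ∈ Finset.range (n - 1),
    (if Nat.testBit (k - 1) (n - 2 - j) then (2 : ℝ) else 0) / 3 ^ (j + 1)) + 1 / 3 ^ n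

/-- Specification of a "transfinite concatenation" loop: it sends the middle-third
Cantor set to `b₀` and traverses `ℓ_{m(2^(n-1)+k-1)}`, affinely reparametrized, on the
closure of the `k`-th open complementary interval of length `3⁻ⁿ`.  Taking `m = id`
yields the loop `ℓ_τ`. -/
def TauSpec (m : ℕ → ℕ) (ℓ : Path bZero bZero) : Prop :=
  (∀ n k : ℕ, 0 < n → 1 ≤ k → k ≤ 2 ^ (n - 1) → ∀ t : unitInterval,
      cantorLeft n k ≤ (t : ℝ) → (t : ℝ) ≤ cantorLeft n k + 1 / 3 ^ n →
      (↑(ℓ t) : ℝ × ℝ) =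
        ellFun (m (2 ^ (n - 1) + k - 1)) (((t : ℝ) - cantorLeft n k) * 3 ^ n)) ∧
  (∀ t : unitInterval,
      (∀ n k : ℕ, 0 < n → 1 ≤ k → k ≤ 2 ^ (n - 1) →
        (t : ℝ) ≤ cantorLeft n k ∨ cantorLeft n k + 1 / 3 ^ n ≤ (t : ℝ)) →
      (↑(ℓ t) : ℝ × ℝ) = (0, 0))

/-- Specification of the transfinite concatenation `ℓ_τ`. -/
def EllTauSpec (ℓ : Path bZero bZero) : Prop := TauSpec id ℓ

/-- The element `c_τ = [ι · ℓ_τ · ι⁻] ∈ π₁(ℍ⁺, b₀⁺)`. -/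
def cTau (ℓ : Path bZero bZero) : FundamentalGroup HEP bPlus :=
  loopClass ((iotaPath.trans ℓ).trans iotaPath.symm)

/-- The element `pₙ = [ι · ℓ_{2n-1} · ℓ_{2n}⁻ · ι⁻] ∈ π₁(ℍ⁺, b₀⁺)`. -/
def pElem (n : ℕ) : FundamentalGroup HEP bPlus :=
  loopClass ((iotaPath.trans ((ellLoop (2 * n - 1)).trans (ellLoop (2 * n)).symm)).trans
    iotaPath.symm)

/-- The subgroup `P = ⟨pₙ : n ≥ 1⟩ ≤ π₁(ℍ⁺, b₀⁺)`. -/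
def Psub : Subgroup (FundamentalGroup HEP bPlus) :=
  Subgroup.closure {g | ∃ n : ℕ, 0 < n ∧ g = pElem n}

/-- Specification of `f_odd ∘ ℓ_τ`, where `f_odd : ℍ → ℍ` satisfies
`f_odd ∘ ℓ_n = ℓ_{2n-1}`. -/
def OddTauSpec (ℓ : Path bZero bZero) : Prop := TauSpec (fun m => 2 * m - 1) ℓ

/-- Specification of `f_even ∘ ℓ_τ`, where `f_even : ℍ → ℍ` satisfies
`f_even ∘ ℓ_n = ℓ_{2n}`. -/
def EvenTauSpec (ℓ : Path bZero bZero) : Prop := TauSpec (fun m => 2 * m) ℓ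

/-- The element `p_τ = [ι · (f_odd∘ℓ_τ) · (f_even∘ℓ_τ)⁻ · ι⁻] ∈ π₁(ℍ⁺, b₀⁺)`. -/
def pTau (ℓodd ℓeven : Path bZero bZero) : FundamentalGroup HEP bPlus :=
  loopClass ((iotaPath.trans (ℓodd.trans ℓeven.symm)).trans iotaPath.symm)

lemma circle_eq_iff (x y c : ℝ) : (x - c) ^ 2 + y ^ 2 = c ^ 2 ↔ x ^ 2 + y ^ 2 = 2 * x * c := by
  constructor <;> intro h <;> linear_combination h

lemma heset_iff (p : ℝ × ℝ) :
    p ∈ HEset ↔ ∃ n : ℕ, 0 < n ∧ p.1 ^ 2 + p.2 ^ 2 = 2 * p.1 / n := by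
  constructor
  · rintro ⟨n, hn, h⟩
    rw [circle_eq_iff] at h
    exact ⟨n, hn, by rw [h]; rw [mul_one_div]⟩
  · rintro ⟨n, hn, h⟩
    refine ⟨n, hn, ?_⟩
    rw [circle_eq_iff, mul_one_div]
    exact h
/-- Scaling map: odd circles to circles, even circles to origin, whisker fixed. -/
def dFun (p : ℝ × ℝ) : ℝ × ℝ :=
  if p.1 ≤ 0 then p
  else if 2 ∣ round (2 * p.1 / (p.1 ^ 2 + p.2 ^ 2)) then (0, 0)
  else ((2 * (round (2 * p.1 / (p.1 ^ 2 + p.2 ^ 2)) : ℝ)) /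
      ((round (2 * p.1 / (p.1 ^ 2 + p.2 ^ 2)) : ℝ) + 1)) • p

lemma dFun_of_nonpos {p : ℝ × ℝ} (h : p.1 ≤ 0) : dFun p = p := if_pos h

lemma heset_x_nonneg {p : ℝ × ℝ} (hp : p ∈ HEset) : 0 ≤ p.1 := by
  rw [heset_iff] at hp
  obtain ⟨n, hn, h⟩ := hp
  have hn' : (0:ℝ) < n := Nat.cast_pos.mpr hn
  have hS : (0:ℝ) ≤ 2 * p.1 / n := by rw [← h]; positivity
  rcases div_nonneg_iff.mp hS with ⟨h1, _⟩ | ⟨_, h2⟩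
  · linarith
  · linarith

lemma heset_r {p : ℝ × ℝ} (hp : p ∈ HEset) (hx : 0 < p.1) :
    ∃ n : ℕ, 0 < n ∧ p.1 ^ 2 + p.2 ^ 2 = 2 * p.1 / n ∧
      2 * p.1 / (p.1 ^ 2 + p.2 ^ 2) = n := by
  rw [heset_iff] at hp
  obtain ⟨n, hn, h⟩ := hp
  have hn' : (0:ℝ) < n := Nat.cast_pos.mpr hn
  have hS : 0 < p.1 ^ 2 + p.2 ^ 2 := by positivity
  refine ⟨n, hn, h, ?_⟩
  rw [h]
  field_simp
lemma ellFun_of_cos_eq_one {k : ℕ} {t : ℝ} (h : Real.cos (2 * Real.pi * t) = 1) :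
    ellFun k t = (0, 0) := by
  have hs : Real.sin (2 * Real.pi * t) = 0 := by
    have := Real.sin_sq_add_cos_sq (2 * Real.pi * t)
    nlinarith [this]
  simp [ellFun, h, hs]

lemma ellFun_r {k : ℕ} (hk : 0 < k) {t : ℝ} (h : Real.cos (2 * Real.pi * t) ≠ 1) :
    0 < (ellFun k t).1 ∧
      2 * (ellFun k t).1 / ((ellFun k t).1 ^ 2 + (ellFun k t).2 ^ 2) = k := by
  have hk' : (0:ℝ) < k := Nat.cast_pos.mpr hk
  have hc1 : Real.cos (2 * Real.pi * t) < 1 := lt_of_le_of_ne (Real.cos_le_one _) h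
  have hsc := Real.sin_sq_add_cos_sq (2 * Real.pi * t)
  set c := Real.cos (2 * Real.pi * t)
  set s := Real.sin (2 * Real.pi * t)
  have hx : (0:ℝ) < (1 - c) / k := div_pos (by linarith) hk'
  have h1 : (ellFun k t).1 = (1 - c) / k := rfl
  have h2 : (ellFun k t).2 = -s / k := rfl
  constructor
  · rw [h1]; exact hx
  · rw [h1, h2]
    have hS : ((1 - c) / k) ^ 2 + (-s / k) ^ 2 = (2 - 2 * c) / k ^ 2 := by
      field_simp
      linear_combination hsc
    rw [hS]
    rw [div_eq_iff (ne_of_gt (div_pos (by linarith) (by positivity) : (0:ℝ) < (2 - 2 * c) / k ^ 2))]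
    field_simp

lemma dFun_ellFun (k : ℕ) (hk : 0 < k) (t : ℝ) :
    dFun (ellFun k t) =
      if 2 ∣ k then (0, 0)
      else ((2 * (k:ℝ)) / ((k:ℝ) + 1)) • ellFun k t := by
  by_cases hc : Real.cos (2 * Real.pi * t) = 1
  · rw [ellFun_of_cos_eq_one hc, dFun_of_nonpos (le_refl 0)]
    split <;> simp [Prod.smul_def]
  · obtain ⟨hx, hr⟩ := ellFun_r hk hc
    unfold dFun
    rw [if_neg (not_le.mpr hx), hr, round_natCast]
    have : ((2:ℤ) ∣ (k:ℤ)) ↔ 2 ∣ k := by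
      exact_mod_cast Int.natCast_dvd_natCast (m := 2) (n := k)
    split_ifs with h1 h2 h2
    · rfl
    · exact absurd (this.mp h1) h2
    · exact absurd (this.mpr h2) h1
    · push_cast; rfl

lemma dFun_ellFun_odd (m : ℕ) (hm : 0 < m) (t : ℝ) :
    dFun (ellFun (2 * m - 1) t) = ellFun m t := by
  rw [dFun_ellFun (2 * m - 1) (by omega) t, if_neg (by omega)]
  have hm' : (0:ℝ) < m := Nat.cast_pos.mpr hm
  have hcast : ((2 * m - 1 : ℕ) : ℝ) = 2 * (m:ℝ) - 1 := by
    push_cast [Nat.cast_sub (by omega : 1 ≤ 2 * m)]; ring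
  have hK : (0:ℝ) < 2 * (m:ℝ) - 1 := by
    have : (1:ℝ) ≤ m := by exact_mod_cast hm
    linarith
  ext
  · show 2 * ((2 * m - 1 : ℕ):ℝ) / (((2 * m - 1 : ℕ):ℝ) + 1) * ((1 - Real.cos (2*Real.pi*t)) / ((2 * m - 1 : ℕ):ℝ)) = (1 - Real.cos (2*Real.pi*t)) / m
    rw [hcast]
    field_simp
    ring
  · show 2 * ((2 * m - 1 : ℕ):ℝ) / (((2 * m - 1 : ℕ):ℝ) + 1) * (-Real.sin (2*Real.pi*t) / ((2 * m - 1 : ℕ):ℝ)) = -Real.sin (2*Real.pi*t) / m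
    rw [hcast]
    field_simp
    ring

lemma dFun_ellFun_even (m : ℕ) (hm : 0 < m) (t : ℝ) :
    dFun (ellFun (2 * m) t) = (0, 0) := by
  rw [dFun_ellFun (2 * m) (by omega) t, if_pos ⟨m, rfl⟩]
lemma origin_mem_HEP : ((0:ℝ), (0:ℝ)) ∈ HEP :=
  Or.inl ⟨⟨by norm_num, le_refl _⟩, rfl⟩

lemma hep_pos_mem_heset {p : ℝ × ℝ} (hp : p ∈ HEP) (hx : 0 < p.1) : p ∈ HEset := by
  rcases hp with h | h
  · exact absurd h.1.2 (not_le.mpr hx)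
  · exact h

lemma dFun_mem {p : ℝ × ℝ} (hp : p ∈ HEP) : dFun p ∈ HEP := by
  by_cases hx : p.1 ≤ 0
  · rw [dFun_of_nonpos hx]; exact hp
  · push_neg at hx
    obtain ⟨n, hn, hS, hr⟩ := heset_r (hep_pos_mem_heset hp hx) hx
    unfold dFun
    rw [if_neg (not_le.mpr hx), hr, round_natCast]
    split_ifs with h
    · exact origin_mem_HEP
    · have hodd : ¬ 2 ∣ n := by
        intro h2
        exact h (by exact_mod_cast Int.natCast_dvd_natCast.mpr h2)
      obtain ⟨j, hj⟩ : ∃ j, n = 2 * j + 1 := (Nat.odd_iff.mpr (Nat.two_dvd_ne_zero.mp hodd))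
      refine Or.inr ((heset_iff _).mpr ⟨j + 1, Nat.succ_pos j, ?_⟩)
      have hn' : (0:ℝ) < n := Nat.cast_pos.mpr hn
      have hcn : ((n:ℤ):ℝ) = (n:ℝ) := by push_cast; rfl
      rw [hcn]
      have hnj : (n:ℝ) = 2 * (j:ℝ) + 1 := by exact_mod_cast congrArg (Nat.cast (R := ℝ)) hj
      have hj1 : ((j + 1 : ℕ) : ℝ) = (j:ℝ) + 1 := by push_cast; ring
      rw [hj1]
      have hsmul1 : (((2 * (n:ℝ)) / ((n:ℝ) + 1)) • p).1 = (2 * (n:ℝ)) / ((n:ℝ) + 1) * p.1 := rfl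
      have hsmul2 : (((2 * (n:ℝ)) / ((n:ℝ) + 1)) • p).2 = (2 * (n:ℝ)) / ((n:ℝ) + 1) * p.2 := rfl
      rw [hsmul1, hsmul2, hnj]
      have hj' : (0:ℝ) ≤ j := Nat.cast_nonneg j
      have hSn : (p.1 ^ 2 + p.2 ^ 2) * (2 * (j:ℝ) + 1) = 2 * p.1 := by
        rw [hS, hnj]
        field_simp
      field_simp
      linear_combination ((j:ℝ) + 1) * hSn
lemma int_two_dvd_iff (n : ℕ) : ((2:ℤ) ∣ (n:ℤ)) ↔ 2 ∣ n := by
  exact_mod_cast Int.natCast_dvd_natCast (m := 2) (n := n)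

lemma dFun_norm_le {p : ℝ × ℝ} (hp : p ∈ HEP) : ‖dFun p‖ ≤ 2 * ‖p‖ := by
  by_cases hx : p.1 ≤ 0
  · rw [dFun_of_nonpos hx]
    nlinarith [norm_nonneg p]
  · push_neg at hx
    obtain ⟨n, hn, hS, hr⟩ := heset_r (hep_pos_mem_heset hp hx) hx
    have hn' : (0:ℝ) < n := Nat.cast_pos.mpr hn
    unfold dFun
    rw [if_neg (not_le.mpr hx), hr, round_natCast]
    split_ifs with h
    · have : ‖((0:ℝ), (0:ℝ))‖ = 0 := by
        have : ((0:ℝ), (0:ℝ)) = (0 : ℝ × ℝ) := rfl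
        rw [this, norm_zero]
      rw [this]
      positivity
    · rw [norm_smul]
      have hcn : ((n:ℤ):ℝ) = (n:ℝ) := by push_cast; rfl
      rw [hcn]
      have h1 : (0:ℝ) ≤ 2 * (n:ℝ) / ((n:ℝ) + 1) := by positivity
      have h2 : 2 * (n:ℝ) / ((n:ℝ) + 1) ≤ 2 := by
        rw [div_le_iff₀ (by linarith)]
        linarith
      rw [Real.norm_eq_abs, abs_of_nonneg h1]
      nlinarith [norm_nonneg p]

lemma continuousOn_dFun : ContinuousOn dFun HEP := by
  intro p hp
  rcases lt_trichotomy p.1 0 with hx | hx | hx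
  · -- whisker interior: dFun = id nearby
    have hU : {q : ℝ × ℝ | q.1 < 0} ∈ nhdsWithin p HEP :=
      mem_nhdsWithin_of_mem_nhds ((isOpen_lt continuous_fst continuous_const).mem_nhds hx)
    refine ContinuousWithinAt.congr_of_eventuallyEq
      (continuous_id.continuousWithinAt) ?_ (dFun_of_nonpos hx.le)
    filter_upwards [hU] with q hq
    exact dFun_of_nonpos hq.le
  · -- at the origin
    have hp0 : p = (0, 0) := by
      rcases hp with h | h
      · exact Prod.ext hx h.2
      · -- p ∈ HEset with p.1 = 0 forces p = 0
        rw [heset_iff] at h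
        obtain ⟨n, hn, h⟩ := h
        rw [hx] at h
        simp only [mul_zero, zero_div] at h
        have h2 : p.2 = 0 := by nlinarith [sq_nonneg p.2]
        exact Prod.ext hx h2
    subst hp0
    have hd0 : dFun (0, 0) = (0, 0) := dFun_of_nonpos (le_refl 0)
    show Filter.Tendsto dFun (nhdsWithin ((0:ℝ),(0:ℝ)) HEP) (nhds (dFun ((0:ℝ),(0:ℝ))))
    rw [hd0]
    have hz : ((0:ℝ), (0:ℝ)) = (0 : ℝ × ℝ) := rfl
    rw [hz]
    refine squeeze_zero_norm' (a := fun q : ℝ × ℝ => 2 * ‖q‖) ?_ ?_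
    · filter_upwards [self_mem_nhdsWithin] with q hq
      exact dFun_norm_le hq
    · have : Filter.Tendsto (fun q : ℝ × ℝ => 2 * ‖q‖) (nhds 0) (nhds (2 * ‖(0 : ℝ × ℝ)‖)) :=
        ((continuous_const.mul continuous_norm : Continuous fun q : ℝ × ℝ => 2 * ‖q‖)).tendsto _
      rw [norm_zero, mul_zero] at this
      exact this.mono_left nhdsWithin_le_nhds
  · -- on a circle, away from the origin
    obtain ⟨n, hn, hS, hr⟩ := heset_r (hep_pos_mem_heset hp hx) hx
    set U : Set (ℝ × ℝ) :=
      {q | 0 < q.1} ∩ (fun q : ℝ × ℝ => 2 * q.1 / (q.1 ^ 2 + q.2 ^ 2)) ⁻¹'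
        {y : ℝ | |y - (n:ℝ)| < 1/2} with hUdef
    have hopen1 : IsOpen {q : ℝ × ℝ | 0 < q.1} := isOpen_lt continuous_const continuous_fst
    have hcontOn : ContinuousOn (fun q : ℝ × ℝ => 2 * q.1 / (q.1 ^ 2 + q.2 ^ 2))
        {q : ℝ × ℝ | 0 < q.1} := by
      apply ContinuousOn.div
      · fun_prop
      · fun_prop
      · intro q hq
        have : (0:ℝ) < q.1 ^ 2 + q.2 ^ 2 := by nlinarith [sq_nonneg q.2, pow_pos (show (0:ℝ) < q.1 from hq) 2]
        exact this.ne'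
    have hopenT : IsOpen {y : ℝ | |y - (n:ℝ)| < 1/2} := by
      have : {y : ℝ | |y - (n:ℝ)| < 1/2} = (fun y : ℝ => |y - (n:ℝ)|) ⁻¹' Set.Iio (1/2) := rfl
      rw [this]
      exact IsOpen.preimage (by fun_prop) isOpen_Iio
    have hUopen : IsOpen U := hcontOn.isOpen_inter_preimage hopen1 hopenT
    have hpU : p ∈ U := by
      refine ⟨hx, ?_⟩
      show |2 * p.1 / (p.1 ^ 2 + p.2 ^ 2) - (n:ℝ)| < 1/2
      rw [hr, sub_self, abs_zero]
      norm_num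
    -- the limit function
    set g : ℝ × ℝ → ℝ × ℝ :=
      if 2 ∣ n then (fun _ => ((0:ℝ), (0:ℝ)))
      else fun q => ((2 * (n:ℝ)) / ((n:ℝ) + 1)) • q with hgdef
    have hgcont : Continuous g := by
      rw [hgdef]
      split_ifs
      · exact continuous_const
      · fun_prop
    have hkey : ∀ q ∈ HEP ∩ U, dFun q = g q := by
      rintro q ⟨hq, hq1, hq2⟩
      obtain ⟨m, hm, hSq, hrq⟩ := heset_r (hep_pos_mem_heset hq hq1) hq1
      have hmn : m = n := by
        by_contra hne
        have h1 : (1:ℝ) ≤ |(m:ℝ) - (n:ℝ)| := by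
          have : ((m:ℤ) - (n:ℤ)) ≠ 0 := by
            intro h0
            exact hne (by exact_mod_cast sub_eq_zero.mp h0)
          have h2 : (1:ℤ) ≤ |(m:ℤ) - (n:ℤ)| := Int.one_le_abs this
          have h3 : |(m:ℝ) - (n:ℝ)| = ((|(m:ℤ) - (n:ℤ)| : ℤ) : ℝ) := by
            rw [Int.cast_abs]
            norm_cast
          rw [h3]
          exact_mod_cast h2
        have h2 : |2 * q.1 / (q.1 ^ 2 + q.2 ^ 2) - (n:ℝ)| < 1/2 := hq2
        rw [hrq] at h2
        linarith
      subst hmn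
      unfold dFun
      rw [if_neg (not_le.mpr hq1), hrq, round_natCast]
      rw [hgdef]
      split_ifs with h1 h2 h2
      · rfl
      · exact absurd ((int_two_dvd_iff m).mp h1) h2
      · exact absurd ((int_two_dvd_iff m).mpr h2) h1
      · have hcn : ((m:ℤ):ℝ) = (m:ℝ) := by push_cast; rfl
        rw [hcn]
    refine ContinuousWithinAt.congr_of_eventuallyEq
      (hgcont.continuousWithinAt) ?_ (hkey p ⟨hp, hpU⟩)
    filter_upwards [self_mem_nhdsWithin,
      mem_nhdsWithin_of_mem_nhds (hUopen.mem_nhds hpU)] with q hq hqU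
    exact hkey q ⟨hq, hqU⟩

/-- The halving map `d : ℍ⁺ → ℍ⁺` as a bundled continuous map. -/
def dMap : C(HEP, HEP) :=
  ⟨fun q => ⟨dFun q.1, dFun_mem q.2⟩, by
    apply Continuous.subtype_mk
    exact continuousOn_dFun.restrict⟩

lemma dMap_bPlus : dMap bPlus = bPlus := by
  apply Subtype.ext
  show dFun ((-1:ℝ), (0:ℝ)) = ((-1:ℝ), (0:ℝ))
  exact dFun_of_nonpos (by norm_num)

lemma dMap_bZero : dMap bZero = bZero := by
  apply Subtype.ext
  show dFun ((0:ℝ), (0:ℝ)) = ((0:ℝ), (0:ℝ))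
  exact dFun_of_nonpos (le_refl 0)
lemma loopClass_congr {Z : Type u} [TopologicalSpace Z] {z : Z} {γ γ' : Path z z}
    (h : γ.Homotopic γ') : loopClass γ = loopClass γ' := by
  unfold loopClass
  have : (⟦γ⟧ : Path.Homotopic.Quotient z z) = ⟦γ'⟧ := Quotient.sound h
  rw [this]

lemma inducedHom_loopClass {Z W : Type u} [TopologicalSpace Z] [TopologicalSpace W]
    (f : C(Z, W)) {z : Z} {w : W} (h : f z = w) (γ : Path z z) (γ' : Path w w)
    (hγ : ∀ t, f (γ t) = γ' t) :
    inducedHom f z h (loopClass γ) = loopClass γ' := by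
  subst h
  have hmap : γ.map f.continuous = γ' := by
    ext t
    exact hγ t
  show (FundamentalGroupoid.fundamentalGroupoidFunctor.map
      (X := TopCat.of Z) (Y := TopCat.of W) (TopCat.ofHom f)).map (⟦γ⟧ : Path.Homotopic.Quotient z z) = ⟦γ'⟧
  rw [← hmap]
  rfl

lemma inducedHom_comp_s8 {Z W V : Type u} [TopologicalSpace Z] [TopologicalSpace W]
    [TopologicalSpace V] (f : C(Z, W)) (g : C(W, V)) (z : Z) {w : W} {v : V}
    (h1 : f z = w) (h2 : g w = v) (h3 : (g.comp f) z = v) :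
    inducedHom (g.comp f) z h3 = (inducedHom g w h2).comp (inducedHom f z h1) := by
  subst h1
  subst h2
  ext a
  show (FundamentalGroupoid.fundamentalGroupoidFunctor.map
      (X := TopCat.of Z) (Y := TopCat.of V) (TopCat.ofHom (g.comp f))).map a =
    (FundamentalGroupoid.fundamentalGroupoidFunctor.map (X := TopCat.of W) (Y := TopCat.of V)
      (TopCat.ofHom g)).map ((FundamentalGroupoid.fundamentalGroupoidFunctor.map (X := TopCat.of Z)
        (Y := TopCat.of W) (TopCat.ofHom f)).map a)
  induction a using Quotient.inductionOn with
  | h γ =>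
    have e1 : (FundamentalGroupoid.fundamentalGroupoidFunctor.map (X := TopCat.of Z)
        (Y := TopCat.of V) (TopCat.ofHom (g.comp f))).map (⟦γ⟧ : Path.Homotopic.Quotient z z) =
        ⟦γ.map (g.comp f).continuous⟧ := by
      rfl
    have e2 : (FundamentalGroupoid.fundamentalGroupoidFunctor.map (X := TopCat.of Z)
        (Y := TopCat.of W) (TopCat.ofHom f)).map (⟦γ⟧ : Path.Homotopic.Quotient z z) =
        ⟦γ.map f.continuous⟧ := by
      rfl
    have e3 : (FundamentalGroupoid.fundamentalGroupoidFunctor.map (X := TopCat.of W)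
        (Y := TopCat.of V) (TopCat.ofHom g)).map
          (⟦γ.map f.continuous⟧ : Path.Homotopic.Quotient (f z) (f z)) =
        ⟦(γ.map f.continuous).map g.continuous⟧ := by
      rfl
    rw [e1, e2]
    refine Eq.trans ?_ e3.symm
    rw [Path.map_map]
    exact congrArg _ (Path.ext rfl)

lemma map_trans_pt {Z W : Type u} [TopologicalSpace Z] [TopologicalSpace W] (f : Z → W)
    {x y z : Z} {x' y' z' : W} {p : Path x y} {q : Path y z} {p' : Path x' y'} {q' : Path y' z'}
    (hp : ∀ t, f (p t) = p' t) (hq : ∀ t, f (q t) = q' t) :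
    ∀ t, f ((p.trans q) t) = (p'.trans q') t := by
  intro t
  rw [Path.trans_apply, Path.trans_apply]
  split_ifs
  · exact hp _
  · exact hq _

lemma map_symm_pt {Z W : Type u} [TopologicalSpace Z] [TopologicalSpace W] (f : Z → W)
    {x y : Z} {x' y' : W} {p : Path x y} {p' : Path x' y'}
    (hp : ∀ t, f (p t) = p' t) : ∀ t, f (p.symm t) = p'.symm t := by
  intro t
  show f (p (unitInterval.symm t)) = p' (unitInterval.symm t)
  exact hp _

lemma drop_refl_homotopic {Z : Type u} [TopologicalSpace Z] {x y : Z}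
    (a : Path x y) (b : Path y y) :
    ((a.trans (b.trans (Path.refl y).symm)).trans a.symm).Homotopic
      ((a.trans b).trans a.symm) := by
  apply Path.Homotopic.hcomp _ (Path.Homotopic.refl a.symm)
  apply Path.Homotopic.hcomp (Path.Homotopic.refl a)
  rw [Path.refl_symm]
  exact ⟨Path.Homotopy.transRefl b⟩
lemma dMap_iota_pt : ∀ t, dMap (iotaPath t) = iotaPath t := by
  intro t
  apply Subtype.ext
  show dFun ((t:ℝ) - 1, 0) = ((t:ℝ) - 1, 0)
  exact dFun_of_nonpos (by simp; linarith [t.2.2])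

lemma dMap_ellLoop_odd_pt (m : ℕ) (hm : 0 < m) :
    ∀ t, dMap (ellLoop (2 * m - 1) t) = ellLoop m t := by
  intro t
  apply Subtype.ext
  exact dFun_ellFun_odd m hm t

lemma dMap_ellLoop_even_pt (m : ℕ) (hm : 0 < m) :
    ∀ t, dMap (ellLoop (2 * m) t) = (Path.refl bZero) t := by
  intro t
  apply Subtype.ext
  exact dFun_ellFun_even m hm t

lemma dMap_pElem (n : ℕ) (hn : 0 < n) :
    inducedHom dMap bPlus dMap_bPlus (pElem n) = cElem n := by
  unfold pElem cElem
  rw [inducedHom_loopClass dMap dMap_bPlus _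
    ((iotaPath.trans ((ellLoop n).trans (Path.refl bZero).symm)).trans iotaPath.symm)
    (map_trans_pt _ (map_trans_pt _ dMap_iota_pt
      (map_trans_pt _ (dMap_ellLoop_odd_pt n hn) (map_symm_pt _ (dMap_ellLoop_even_pt n hn))))
      (map_symm_pt _ dMap_iota_pt))]
  exact loopClass_congr (drop_refl_homotopic iotaPath (ellLoop n))

lemma tau_cases (t : unitInterval) :
    (∀ n k : ℕ, 0 < n → 1 ≤ k → k ≤ 2 ^ (n - 1) →
      (t : ℝ) ≤ cantorLeft n k ∨ cantorLeft n k + 1 / 3 ^ n ≤ (t : ℝ)) ∨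
    ∃ n k : ℕ, 0 < n ∧ 1 ≤ k ∧ k ≤ 2 ^ (n - 1) ∧
      cantorLeft n k ≤ (t : ℝ) ∧ (t : ℝ) ≤ cantorLeft n k + 1 / 3 ^ n := by
  by_cases h : ∀ n k : ℕ, 0 < n → 1 ≤ k → k ≤ 2 ^ (n - 1) →
      (t : ℝ) ≤ cantorLeft n k ∨ cantorLeft n k + 1 / 3 ^ n ≤ (t : ℝ)
  · exact Or.inl h
  · push_neg at h
    obtain ⟨n, k, hn, hk1, hk2, h1, h2⟩ := h
    exact Or.inr ⟨n, k, hn, hk1, hk2, h1.le, h2.le⟩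

section TauPointwise

variable {ellTau oddTau evenTau : Path bZero bZero}

lemma dMap_oddTau_pt (hTau : EllTauSpec ellTau) (hodd : OddTauSpec oddTau) :
    ∀ t, dMap (oddTau t) = ellTau t := by
  intro t
  apply Subtype.ext
  rcases tau_cases t with h | ⟨n, k, hn, hk1, hk2, h1, h2⟩
  · show dFun _ = _
    rw [hodd.2 t h, hTau.2 t h]
    exact dFun_of_nonpos (le_refl 0)
  · have hM : 0 < 2 ^ (n - 1) + k - 1 := by
      have := Nat.one_le_two_pow (n := n - 1)
      omega
    show dFun _ = _
    rw [hodd.1 n k hn hk1 hk2 t h1 h2, hTau.1 n k hn hk1 hk2 t h1 h2]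
    exact dFun_ellFun_odd _ hM _

lemma dMap_evenTau_pt (heven : EvenTauSpec evenTau) :
    ∀ t, dMap (evenTau t) = (Path.refl bZero) t := by
  intro t
  apply Subtype.ext
  rcases tau_cases t with h | ⟨n, k, hn, hk1, hk2, h1, h2⟩
  · show dFun _ = _
    rw [heven.2 t h]
    exact dFun_of_nonpos (le_refl 0)
  · have hM : 0 < 2 ^ (n - 1) + k - 1 := by
      have := Nat.one_le_two_pow (n := n - 1)
      omega
    show dFun _ = ((0:ℝ), (0:ℝ))
    rw [heven.1 n k hn hk1 hk2 t h1 h2]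
    exact dFun_ellFun_even _ hM _

lemma dMap_pTau (hTau : EllTauSpec ellTau) (hodd : OddTauSpec oddTau)
    (heven : EvenTauSpec evenTau) :
    inducedHom dMap bPlus dMap_bPlus (pTau oddTau evenTau) = cTau ellTau := by
  unfold pTau cTau
  rw [inducedHom_loopClass dMap dMap_bPlus _
    ((iotaPath.trans (ellTau.trans (Path.refl bZero).symm)).trans iotaPath.symm)
    (map_trans_pt _ (map_trans_pt _ dMap_iota_pt
      (map_trans_pt _ (dMap_oddTau_pt hTau hodd) (map_symm_pt _ (dMap_evenTau_pt heven))))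
      (map_symm_pt _ dMap_iota_pt))]
  exact loopClass_congr (drop_refl_homotopic iotaPath ellTau)

end TauPointwise

lemma dMap_Psub_le : Subgroup.map (inducedHom dMap bPlus dMap_bPlus) Psub ≤ Csub := by
  unfold Psub
  rw [MonoidHom.map_closure]
  apply Subgroup.closure_le _ |>.mpr
  rintro _ ⟨g, ⟨n, hn, rfl⟩, rfl⟩
  rw [dMap_pElem n hn]
  exact Subgroup.subset_closure ⟨n, hn, rfl⟩
/-- If `H ≤ π₁(X,x₀)` is `(P, p_τ)`-closed then `H` is `(C, c_τ)`-closed. -/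
theorem stmt8 {X : Type} [TopologicalSpace X] [PathConnectedSpace X] (x₀ : X)
    (H : Subgroup (FundamentalGroup X x₀))
    (ellTau : Path bZero bZero) (hTau : EllTauSpec ellTau)
    (oddTau : Path bZero bZero) (hodd : OddTauSpec oddTau)
    (evenTau : Path bZero bZero) (heven : EvenTauSpec evenTau) :
    IsTGClosed bPlus Psub (pTau oddTau evenTau) x₀ H →
      IsTGClosed bPlus Csub (cTau ellTau) x₀ H := by
  intro hP f hf hC
  have hF : (f.comp dMap) bPlus = x₀ := by
    show f (dMap bPlus) = x₀
    rw [dMap_bPlus, hf]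
  have hcomp : inducedHom (f.comp dMap) bPlus hF =
      (inducedHom f bPlus hf).comp (inducedHom dMap bPlus dMap_bPlus) :=
    inducedHom_comp_s8 dMap f bPlus dMap_bPlus hf hF
  have hP' := hP (f.comp dMap) hF ?_
  · rw [hcomp] at hP'
    rw [MonoidHom.comp_apply, dMap_pTau hTau hodd heven] at hP'
    exact hP'
  · rw [hcomp, ← Subgroup.map_map]
    refine le_trans (Subgroup.map_mono ?_) hC
    exact dMap_Psub_le
end
end

section
/- Suppose X is a path-connected metric space with basepoint x₀ and N ≤ H ≤ π₁(X,x₀), where N is a normal subgroup of π₁(X,x₀) and p_N : X̃_N → X has the unique path lifting property. If for every point x ∈ X there is an open neighborhood U of x such that π(x,U) ∩ H ≤ N, then p_H : X̃_H → X has the unique path lifting property. -/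
open CategoryTheory

noncomputable section

universe u

attribute [local instance] Path.Homotopic.setoid

/-! ### The space `X̃_H` with the whisker topology and the endpoint projection -/

/-- The relation identifying paths `α ∼ β` from `x₀` iff they have the same endpoint
and `[α·β⁻] ∈ H`. -/
def WhiskerRel {X : Type} [TopologicalSpace X] (x₀ : X)
    (H : Subgroup (FundamentalGroup X x₀)) :
    (Σ x : X, Path x₀ x) → (Σ x : X, Path x₀ x) → Prop :=
  fun a b => ∃ h : a.1 = b.1, loopClass (a.2.trans ((b.2.cast rfl h).symm)) ∈ H

/-- The space `X̃_H` of classes `H[α]` of paths starting at `x₀`. -/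
def WhiskerSpace {X : Type} [TopologicalSpace X] (x₀ : X)
    (H : Subgroup (FundamentalGroup X x₀)) : Type :=
  Quot (WhiskerRel x₀ H)

/-- The basic set `B(H[α], U) = { H[α·ε] ∣ ε a path in U starting at `α 1` }`. -/
def whiskerBasic {X : Type} [TopologicalSpace X] (x₀ : X)
    (H : Subgroup (FundamentalGroup X x₀)) (a : Σ x : X, Path x₀ x) (U : Set X) :
    Set (WhiskerSpace x₀ H) :=
  {q | ∃ (y : X) (ε : Path a.1 y), (∀ t, ε t ∈ U) ∧
    q = Quot.mk (WhiskerRel x₀ H) ⟨y, a.2.trans ε⟩}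

/-- The whisker (standard) topology on `X̃_H`, generated by the sets `B(H[α], U)` for
`U` an open neighborhood of `α 1`. -/
instance whiskerTopology {X : Type} [TopologicalSpace X] (x₀ : X)
    (H : Subgroup (FundamentalGroup X x₀)) : TopologicalSpace (WhiskerSpace x₀ H) :=
  TopologicalSpace.generateFrom
    {s | ∃ (a : Σ x : X, Path x₀ x) (U : Set X), IsOpen U ∧ a.1 ∈ U ∧
      s = whiskerBasic x₀ H a U}

/-- The endpoint projection `p_H : X̃_H → X`, `H[α] ↦ α 1`. -/
def endpointProj {X : Type} [TopologicalSpace X] (x₀ : X)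
    (H : Subgroup (FundamentalGroup X x₀)) : WhiskerSpace x₀ H → X :=
  Quot.lift (fun a => a.1) (by rintro a b ⟨h, -⟩; exact h)

/-- A map has the unique path lifting property if any two paths with the same initial
point and equal compositions with the map are equal. -/
def HasUniquePathLifting {A B : Type} [TopologicalSpace A] [TopologicalSpace B]
    (p : A → B) : Prop :=
  ∀ γ δ : C(unitInterval, A), γ 0 = δ 0 → (∀ t, p (γ t) = p (δ t)) → γ = δ

/-- The subgroup `π(β,U) = {[β·δ·β⁻] : δ a loop in U based at x}` and the subgroup
`π(x,U)` generated by all `π(β,U)` over paths `β` from `x₀` to `x`. -/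
def spanierAt {X : Type} [TopologicalSpace X] (x₀ x : X) (U : Set X) :
    Subgroup (FundamentalGroup X x₀) :=
  Subgroup.closure {g | ∃ (β : Path x₀ x) (δ : Path x x),
    (∀ t, δ t ∈ U) ∧ g = loopClass ((β.trans δ).trans β.symm)}

namespace Stmt15
open CategoryTheory
variable {X : Type} [TopologicalSpace X] {x₀ : X}

section Algebra

/-- Morphism in the fundamental groupoid determined by a path. -/
def hm {x y : X} (α : Path x y) :
    (⟨x⟩ : FundamentalGroupoid X) ⟶ (⟨y⟩ : FundamentalGroupoid X) := ⟦α⟧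

lemma hm_trans {x y z : X} (α : Path x y) (β : Path y z) :
    hm (α.trans β) = hm α ≫ hm β := rfl

lemma hm_symm {x y : X} (α : Path x y) : hm α.symm = Groupoid.inv (hm α) := rfl

lemma hm_refl (x : X) : hm (Path.refl x) = 𝟙 (⟨x⟩ : FundamentalGroupoid X) := rfl

lemma hm_homotopic {x y : X} {α β : Path x y} (h : α.Homotopic β) : hm α = hm β :=
  Quotient.sound h

/-- The element of the fundamental group from a groupoid loop. -/
def fg (p : (⟨x₀⟩ : FundamentalGroupoid X) ⟶ (⟨x₀⟩ : FundamentalGroupoid X)) :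
    FundamentalGroup X x₀ :=
  FundamentalGroup.fromPath (X := TopCat.of X) p

lemma loopClass_eq_fg (γ : Path x₀ x₀) : loopClass γ = fg (hm γ) := rfl

lemma fg_comp (p q : (⟨x₀⟩ : FundamentalGroupoid X) ⟶ (⟨x₀⟩ : FundamentalGroupoid X)) :
    fg (p ≫ q) = fg q * fg p := by
  rfl

lemma fg_inv (p : (⟨x₀⟩ : FundamentalGroupoid X) ⟶ (⟨x₀⟩ : FundamentalGroupoid X)) :
    (fg p)⁻¹ = fg (Groupoid.inv p) := by
  rfl

lemma fg_one : fg (𝟙 (⟨x₀⟩ : FundamentalGroupoid X)) = 1 := by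
  rfl

variable (H : Subgroup (FundamentalGroup X x₀))

/-- Membership of a groupoid loop class in the subgroup `H`. -/
def mH (p : (⟨x₀⟩ : FundamentalGroupoid X) ⟶ (⟨x₀⟩ : FundamentalGroupoid X)) : Prop :=
  fg p ∈ H

lemma mH_loopClass (γ : Path x₀ x₀) : loopClass γ ∈ H ↔ mH H (hm γ) := Iff.rfl

lemma mH_comp {p q} (hp : mH H p) (hq : mH H q) : mH H (p ≫ q) := by
  unfold mH at *; rw [fg_comp]; exact mul_mem hq hp

lemma mH_inv {p} (hp : mH H p) : mH H (Groupoid.inv p) := by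
  unfold mH at *; rw [← fg_inv]; exact inv_mem hp

lemma mH_one : mH H (𝟙 _) := by unfold mH; rw [fg_one]; exact one_mem H

end Algebra

section Rel

variable (H : Subgroup (FundamentalGroup X x₀))

/-- The difference loop class of two paths with the same endpoints. -/
def dneg {x : X} (α β : Path x₀ x) :
    (⟨x₀⟩ : FundamentalGroupoid X) ⟶ (⟨x₀⟩ : FundamentalGroupoid X) :=
  hm α ≫ Groupoid.inv (hm β)

lemma whiskerRel_iff {x : X} (α β : Path x₀ x) :
    WhiskerRel x₀ H ⟨x, α⟩ ⟨x, β⟩ ↔ mH H (dneg α β) := by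
  constructor
  · rintro ⟨h, hh⟩
    have : (β.cast rfl h) = β := rfl
    rw [this] at hh
    rw [mH_loopClass, hm_trans, hm_symm] at hh
    exact hh
  · intro h
    refine ⟨rfl, ?_⟩
    rw [show (β.cast rfl (rfl : x = x)) = β from rfl]
    rw [mH_loopClass, hm_trans, hm_symm]
    exact h

lemma whiskerRel_equivalence : Equivalence (WhiskerRel x₀ H) := by
  constructor
  · rintro ⟨x, α⟩
    rw [whiskerRel_iff]
    unfold dneg
    rw [Groupoid.comp_inv]
    exact mH_one H
  · rintro ⟨x, α⟩ ⟨y, β⟩ h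
    obtain ⟨e, -⟩ := id h
    dsimp only at e
    subst e
    rw [whiskerRel_iff] at h ⊢
    have := mH_inv H h
    unfold dneg at *
    simpa using this
  · rintro ⟨x, α⟩ ⟨y, β⟩ ⟨z, γ⟩ h1 h2
    obtain ⟨e, -⟩ := id h1
    dsimp only at e; subst e
    obtain ⟨e, -⟩ := id h2
    dsimp only at e; subst e
    rw [whiskerRel_iff] at h1 h2 ⊢
    have := mH_comp H h1 h2
    unfold dneg at *
    simpa using this

lemma mk_eq_mk_iff {x : X} (α β : Path x₀ x) :
    Quot.mk (WhiskerRel x₀ H) ⟨x, α⟩ = Quot.mk (WhiskerRel x₀ H) ⟨x, β⟩ ↔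
      mH H (dneg α β) := by
  rw [Quot.eq, (whiskerRel_equivalence H).eqvGen_iff, whiskerRel_iff]

lemma endpointProj_mk (a : Σ x : X, Path x₀ x) :
    endpointProj x₀ H (Quot.mk (WhiskerRel x₀ H) a) = a.1 := rfl

/-- Homotopic paths give the same point of the whisker space. -/
lemma mk_eq_of_hm_eq {x : X} {α β : Path x₀ x} (h : hm α = hm β) :
    Quot.mk (WhiskerRel x₀ H) ⟨x, α⟩ = Quot.mk (WhiskerRel x₀ H) ⟨x, β⟩ := by
  rw [mk_eq_mk_iff]
  unfold dneg
  rw [h, Groupoid.comp_inv]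
  exact mH_one H

/-- Right-whiskering invariance. -/
lemma mk_trans_congr {x y : X} {α β : Path x₀ x} (ε : Path x y)
    (h : Quot.mk (WhiskerRel x₀ H) ⟨x, α⟩ = Quot.mk (WhiskerRel x₀ H) ⟨x, β⟩) :
    Quot.mk (WhiskerRel x₀ H) ⟨y, α.trans ε⟩ = Quot.mk (WhiskerRel x₀ H) ⟨y, β.trans ε⟩ := by
  rw [mk_eq_mk_iff] at h ⊢
  unfold dneg at *
  convert h using 1
  rw [hm_trans, hm_trans]
  simp [Groupoid.inv_eq_inv, Category.assoc]

end Rel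
end Stmt15
namespace Stmt15
open CategoryTheory
variable {X : Type} [TopologicalSpace X] {x₀ : X}
section Topo
variable (H : Subgroup (FundamentalGroup X x₀))

lemma trans_mem_of_mem {x y z : X} {ε : Path x y} {δ : Path y z} {U : Set X}
    (h1 : ∀ t, ε t ∈ U) (h2 : ∀ t, δ t ∈ U) : ∀ t, (ε.trans δ) t ∈ U := by
  intro t
  rw [Path.trans_apply]
  split_ifs
  · exact h1 _
  · exact h2 _

lemma symm_mem_of_mem {x y : X} {ε : Path x y} {U : Set X}
    (h1 : ∀ t, ε t ∈ U) : ∀ t, ε.symm t ∈ U := fun t => h1 _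

lemma isOpen_whiskerBasic {a : Σ x : X, Path x₀ x} {U : Set X} (hU : IsOpen U)
    (ha : a.1 ∈ U) : IsOpen (whiskerBasic x₀ H a U) := by
  apply TopologicalSpace.isOpen_generateFrom_of_mem
  exact ⟨a, U, hU, ha, rfl⟩

lemma self_mem_whiskerBasic {x : X} (α : Path x₀ x) {U : Set X} (hx : x ∈ U) :
    Quot.mk (WhiskerRel x₀ H) ⟨x, α⟩ ∈ whiskerBasic x₀ H ⟨x, α⟩ U := by
  refine ⟨x, Path.refl x, fun t => hx, ?_⟩
  apply (mk_eq_of_hm_eq H _).symm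
  rw [hm_trans, hm_refl, Category.comp_id]

lemma whiskerBasic_mono {a : Σ x : X, Path x₀ x} {U V : Set X} (hUV : U ⊆ V) :
    whiskerBasic x₀ H a U ⊆ whiskerBasic x₀ H a V := by
  rintro q ⟨y, ε, hε, rfl⟩
  exact ⟨y, ε, fun t => hUV (hε t), rfl⟩

lemma whiskerBasic_trans_subset {x y : X} (α : Path x₀ x) (ε : Path x y)
    {U W : Set X} (hε : ∀ t, ε t ∈ U) (hW : W ⊆ U) :
    whiskerBasic x₀ H ⟨y, α.trans ε⟩ W ⊆ whiskerBasic x₀ H ⟨x, α⟩ U := by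
  rintro q ⟨z, δ, hδ, rfl⟩
  refine ⟨z, ε.trans δ, trans_mem_of_mem hε (fun t => hW (hδ t)), ?_⟩
  apply mk_eq_of_hm_eq
  simp [hm_trans, Category.assoc]

lemma whiskerBasic_congr {x : X} {α β : Path x₀ x} (U : Set X)
    (h : Quot.mk (WhiskerRel x₀ H) ⟨x, α⟩ = Quot.mk (WhiskerRel x₀ H) ⟨x, β⟩) :
    whiskerBasic x₀ H ⟨x, α⟩ U = whiskerBasic x₀ H ⟨x, β⟩ U := by
  have key : ∀ (α' β' : Path x₀ x),
      Quot.mk (WhiskerRel x₀ H) ⟨x, α'⟩ = Quot.mk (WhiskerRel x₀ H) ⟨x, β'⟩ →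
      whiskerBasic x₀ H ⟨x, α'⟩ U ⊆ whiskerBasic x₀ H ⟨x, β'⟩ U := by
    rintro α' β' h' q ⟨z, δ, hδ, rfl⟩
    exact ⟨z, δ, hδ, mk_trans_congr H δ h'⟩
  exact le_antisymm (key _ _ h) (key _ _ h.symm)

lemma exists_basic_subset {s : Set (WhiskerSpace x₀ H)} (hs : IsOpen s)
    {x : X} {α : Path x₀ x} (hq : Quot.mk (WhiskerRel x₀ H) ⟨x, α⟩ ∈ s) :
    ∃ U : Set X, IsOpen U ∧ x ∈ U ∧ whiskerBasic x₀ H ⟨x, α⟩ U ⊆ s := by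
  have hs' : TopologicalSpace.GenerateOpen
      {s | ∃ (a : Σ x : X, Path x₀ x) (U : Set X), IsOpen U ∧ a.1 ∈ U ∧
        s = whiskerBasic x₀ H a U} s := hs
  clear hs
  induction hs' with
  | basic s hgen =>
    obtain ⟨b, V, hV, hbV, rfl⟩ := hgen
    obtain ⟨y, ε, hε, heq⟩ := hq
    have hxy : x = y := congrArg (endpointProj x₀ H) heq
    subst hxy
    refine ⟨V, hV, ?_, ?_⟩
    · have := hε 1
      rwa [ε.target] at this
    · rw [whiskerBasic_congr H V heq]
      exact whiskerBasic_trans_subset H b.2 ε hε le_rfl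
  | univ => exact ⟨Set.univ, isOpen_univ, trivial, fun _ _ => trivial⟩
  | inter s t _ _ ihs iht =>
    obtain ⟨U, hU, hxU, hUs⟩ := ihs hq.1
    obtain ⟨V, hV, hxV, hVt⟩ := iht hq.2
    exact ⟨U ∩ V, hU.inter hV, ⟨hxU, hxV⟩,
      fun q hq' => ⟨hUs (whiskerBasic_mono H Set.inter_subset_left hq'),
        hVt (whiskerBasic_mono H Set.inter_subset_right hq')⟩⟩
  | sUnion S _ ih =>
    obtain ⟨s, hsS, hqs⟩ := hq
    obtain ⟨U, hU, hxU, hUs⟩ := ih s hsS hqs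
    exact ⟨U, hU, hxU, fun q hq' => ⟨s, hsS, hUs hq'⟩⟩

end Topo
end Stmt15
namespace Stmt15
open CategoryTheory
variable {X : Type} [TopologicalSpace X] {x₀ : X}
section Lift
variable (N H : Subgroup (FundamentalGroup X x₀))

/-- The natural map `X̃_N → X̃_H` for `N ≤ H`. -/
def qmap (hNH : N ≤ H) : WhiskerSpace x₀ N → WhiskerSpace x₀ H :=
  Quot.lift (Quot.mk (WhiskerRel x₀ H)) (by
    rintro a b ⟨e, he⟩
    exact Quot.sound ⟨e, hNH he⟩)

lemma qmap_mk (hNH : N ≤ H) (a : Σ x : X, Path x₀ x) :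
    qmap N H hNH (Quot.mk (WhiskerRel x₀ N) a) = Quot.mk (WhiskerRel x₀ H) a := rfl

lemma endpointProj_qmap (hNH : N ≤ H) (q : WhiskerSpace x₀ N) :
    endpointProj x₀ H (qmap N H hNH q) = endpointProj x₀ N q := by
  induction q using Quot.ind
  rfl

lemma mem_spanierAt {x y : X} (α : Path x₀ x) (ε ε' : Path x y) {U : Set X}
    (hε : ∀ t, ε t ∈ U) (hε' : ∀ t, ε' t ∈ U) :
    fg (dneg (α.trans ε) (α.trans ε')) ∈ spanierAt x₀ x U := by
  apply Subgroup.subset_closure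
  refine ⟨α, ε.trans ε'.symm, trans_mem_of_mem hε (symm_mem_of_mem hε'), ?_⟩
  rw [loopClass_eq_fg]
  congr 1
  unfold dneg
  simp [hm_trans, hm_symm, Groupoid.inv_eq_inv, Category.assoc]

lemma key_welldef {x y : X} (α β : Path x₀ x) {U : Set X}
    (hspan : spanierAt x₀ x U ⊓ H ≤ N) (hNnormal : N.Normal)
    (ε ε' : Path x y) (hε : ∀ t, ε t ∈ U) (hε' : ∀ t, ε' t ∈ U)
    (h : Quot.mk (WhiskerRel x₀ H) ⟨y, α.trans ε⟩ =
      Quot.mk (WhiskerRel x₀ H) ⟨y, α.trans ε'⟩) :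
    Quot.mk (WhiskerRel x₀ N) ⟨y, β.trans ε⟩ =
      Quot.mk (WhiskerRel x₀ N) ⟨y, β.trans ε'⟩ := by
  rw [mk_eq_mk_iff] at h ⊢
  have hg : fg (dneg (α.trans ε) (α.trans ε')) ∈ N :=
    hspan ⟨mem_spanierAt α ε ε' hε hε', h⟩
  set u : (⟨x₀⟩ : FundamentalGroupoid X) ⟶ (⟨x₀⟩ : FundamentalGroupoid X) :=
    hm β ≫ Groupoid.inv (hm α) with hu
  have hword : dneg (β.trans ε) (β.trans ε') =
      u ≫ dneg (α.trans ε) (α.trans ε') ≫ Groupoid.inv u := by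
    unfold dneg
    simp [hu, hm_trans, Groupoid.inv_eq_inv, Category.assoc]
  show fg _ ∈ N
  rw [hword, fg_comp, fg_comp, ← fg_inv]
  simpa [mul_assoc] using hNnormal.conj_mem _ hg (fg u)⁻¹

variable (x : X) (α β : Path x₀ x) (U : Set X)

open Classical in
/-- The local section of `qmap` over the basic set `B(H[α], U)`, sending `H[α·ε]`
to `N[β·ε]`. -/
def psiMap : WhiskerSpace x₀ H → WhiskerSpace x₀ N := fun q =>
  if h : q ∈ whiskerBasic x₀ H ⟨x, α⟩ U then
    Quot.mk (WhiskerRel x₀ N) ⟨h.choose, β.trans h.choose_spec.choose⟩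
  else Quot.mk (WhiskerRel x₀ N) ⟨x, β⟩

lemma key_welldef' (hspan : spanierAt x₀ x U ⊓ H ≤ N) (hNnormal : N.Normal)
    {y y' : X} (ε : Path x y) (ε' : Path x y')
    (hε : ∀ t, ε t ∈ U) (hε' : ∀ t, ε' t ∈ U)
    (h : Quot.mk (WhiskerRel x₀ H) ⟨y, α.trans ε⟩ =
      Quot.mk (WhiskerRel x₀ H) ⟨y', α.trans ε'⟩) :
    Quot.mk (WhiskerRel x₀ N) ⟨y, β.trans ε⟩ =
      Quot.mk (WhiskerRel x₀ N) ⟨y', β.trans ε'⟩ := by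
  have e : y = y' := congrArg (endpointProj x₀ H) h
  subst e
  exact key_welldef N H α β hspan hNnormal ε ε' hε hε' h

lemma psiMap_spec (hspan : spanierAt x₀ x U ⊓ H ≤ N) (hNnormal : N.Normal)
    {y : X} (ε : Path x y) (hε : ∀ t, ε t ∈ U) :
    psiMap N H x α β U (Quot.mk (WhiskerRel x₀ H) ⟨y, α.trans ε⟩) =
      Quot.mk (WhiskerRel x₀ N) ⟨y, β.trans ε⟩ := by
  have hq : Quot.mk (WhiskerRel x₀ H) ⟨y, α.trans ε⟩ ∈ whiskerBasic x₀ H ⟨x, α⟩ U :=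
    ⟨y, ε, hε, rfl⟩
  unfold psiMap; erw [dif_pos hq]
  exact key_welldef' N H x α β U hspan hNnormal _ ε
    hq.choose_spec.choose_spec.1 hε hq.choose_spec.choose_spec.2.symm

lemma psiMap_continuousOn (hU : IsOpen U) (hspan : spanierAt x₀ x U ⊓ H ≤ N)
    (hNnormal : N.Normal) :
    ContinuousOn (psiMap N H x α β U) (whiskerBasic x₀ H ⟨x, α⟩ U) := by
  intro q hq
  obtain ⟨y, ε, hε, hqe⟩ := hq
  subst hqe
  have hy : y ∈ U := by have := hε 1; rwa [ε.target] at this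
  intro t ht
  rw [Filter.mem_map]
  rw [psiMap_spec N H x α β U hspan hNnormal ε hε] at ht
  obtain ⟨s', hs't, hs'open, hfq⟩ := mem_nhds_iff.1 ht
  obtain ⟨V, hV, hyV, hVsub⟩ := exists_basic_subset N hs'open hfq
  have hopen : IsOpen (whiskerBasic x₀ H ⟨y, α.trans ε⟩ (U ∩ V)) :=
    isOpen_whiskerBasic H (hU.inter hV) ⟨hy, hyV⟩
  have hmemn : whiskerBasic x₀ H ⟨y, α.trans ε⟩ (U ∩ V) ∈
      @nhds (WhiskerSpace x₀ H) (whiskerTopology x₀ H)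
        (Quot.mk (WhiskerRel x₀ H) ⟨y, α.trans ε⟩) :=
    hopen.mem_nhds (self_mem_whiskerBasic H _ ⟨hy, hyV⟩)
  have hmem : whiskerBasic x₀ H ⟨y, α.trans ε⟩ (U ∩ V) ∈
      @nhdsWithin (WhiskerSpace x₀ H) (whiskerTopology x₀ H)
        (Quot.mk (WhiskerRel x₀ H) ⟨y, α.trans ε⟩)
        (whiskerBasic x₀ H ⟨x, α⟩ U) :=
    mem_nhdsWithin_of_mem_nhds hmemn
  refine Filter.mem_of_superset hmem ?_
  rintro q' ⟨z, δ, hδ, hq'e⟩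
  subst hq'e
  show psiMap N H x α β U _ ∈ t
  have e1 : Quot.mk (WhiskerRel x₀ H) ⟨z, (α.trans ε).trans δ⟩ =
      Quot.mk (WhiskerRel x₀ H) ⟨z, α.trans (ε.trans δ)⟩ := by
    apply mk_eq_of_hm_eq
    simp [hm_trans, Category.assoc]
  have e2 : Quot.mk (WhiskerRel x₀ N) ⟨z, β.trans (ε.trans δ)⟩ =
      Quot.mk (WhiskerRel x₀ N) ⟨z, (β.trans ε).trans δ⟩ := by
    apply mk_eq_of_hm_eq
    simp [hm_trans, Category.assoc]
  have : Quot.mk (WhiskerRel x₀ H) ⟨z, (α.trans ε).trans δ⟩ =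
      Quot.mk (WhiskerRel x₀ H) ⟨z, α.trans (ε.trans δ)⟩ := e1
  rw [show (⟨y, α.trans ε⟩ : Σ x : X, Path x₀ x).2 = α.trans ε from rfl]
  rw [this, psiMap_spec N H x α β U hspan hNnormal (ε.trans δ)
    (trans_mem_of_mem hε fun u => (hδ u).1), e2]
  exact hs't (hVsub ⟨z, δ, fun u => (hδ u).2, rfl⟩)

end Lift
end Stmt15
namespace Stmt15
open CategoryTheory
variable {X : Type} [TopologicalSpace X] {x₀ : X}

lemma lift_exists (N H : Subgroup (FundamentalGroup X x₀)) (hNH : N ≤ H)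
    (hNnormal : N.Normal)
    (hU : ∀ x : X, ∃ U : Set X, IsOpen U ∧ x ∈ U ∧ spanierAt x₀ x U ⊓ H ≤ N)
    (γ : C(unitInterval, WhiskerSpace x₀ H)) (a₀ : Σ x : X, Path x₀ x)
    (h₀ : γ 0 = Quot.mk (WhiskerRel x₀ H) a₀) :
    ∃ f : unitInterval → WhiskerSpace x₀ N, Continuous f ∧
      f 0 = Quot.mk (WhiskerRel x₀ N) a₀ ∧
      ∀ t, qmap N H hNH (f t) = γ t := by
  set P : unitInterval → Prop := fun T => ∃ f : unitInterval → WhiskerSpace x₀ N,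
    ContinuousOn f (Set.Icc 0 T) ∧ f 0 = Quot.mk (WhiskerRel x₀ N) a₀ ∧
      ∀ t ≤ T, qmap N H hNH (f t) = γ t with hPdef
  have hmono : ∀ {s T : unitInterval}, s ≤ T → P T → P s := by
    rintro s T hsT ⟨f, hf, h0, hq⟩
    exact ⟨f, hf.mono (Set.Icc_subset_Icc le_rfl hsT), h0,
      fun t ht => hq t (ht.trans hsT)⟩
  have hP0 : P 0 := by
    refine ⟨fun _ => Quot.mk (WhiskerRel x₀ N) a₀, continuousOn_const, rfl, ?_⟩
    intro t ht
    have : t = 0 := le_antisymm ht unitInterval.nonneg'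
    rw [this, qmap_mk, ← h₀]
  have hext : ∀ T : unitInterval, ∃ δ : ℝ, 0 < δ ∧ ∀ s t : unitInterval,
      P s → s ≤ T → T.1 - δ < s.1 → t.1 ≤ T.1 + δ / 2 → P t := by
    intro T
    obtain ⟨a, ha⟩ := Quot.exists_rep (γ T)
    obtain ⟨x, α⟩ := a
    obtain ⟨U, hUopen, hxU, hspan⟩ := hU x
    have hγT : γ T ∈ whiskerBasic x₀ H ⟨x, α⟩ U := by
      rw [← ha]
      exact self_mem_whiskerBasic H α hxU
    have hB : γ ⁻¹' (whiskerBasic x₀ H ⟨x, α⟩ U) ∈ nhds T :=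
      γ.continuous.continuousAt.preimage_mem_nhds
        ((isOpen_whiskerBasic H hUopen hxU).mem_nhds hγT)
    obtain ⟨δ, hδpos, hball⟩ := Metric.mem_nhds_iff.1 hB
    refine ⟨δ, hδpos, ?_⟩
    intro s t hPs hsT hs1 ht1
    by_cases hts : t ≤ s
    · exact hmono hts hPs
    push_neg at hts
    have hsT' : s.1 ≤ T.1 := hsT
    have hinB : ∀ u : unitInterval, s ≤ u → u ≤ t →
        γ u ∈ whiskerBasic x₀ H ⟨x, α⟩ U := by
      intro u hsu hut
      apply hball
      rw [Metric.mem_ball, Subtype.dist_eq, Real.dist_eq, abs_lt]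
      have h1 : s.1 ≤ u.1 := hsu
      have h2 : u.1 ≤ t.1 := hut
      constructor <;> linarith
    obtain ⟨f, hf, hf0, hfq⟩ := hPs
    have hγs : γ s ∈ whiskerBasic x₀ H ⟨x, α⟩ U :=
      hinB s le_rfl (le_of_lt hts)
    obtain ⟨y, εs, hεs, hγse⟩ := hγs
    obtain ⟨b, hb⟩ := Quot.exists_rep (f s)
    have hfs : Quot.mk (WhiskerRel x₀ H) b =
        Quot.mk (WhiskerRel x₀ H) ⟨y, α.trans εs⟩ := by
      rw [← qmap_mk N H hNH, hb, hfq s le_rfl, hγse]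
    obtain ⟨yb, βs⟩ := b
    have hyb : yb = y := congrArg (endpointProj x₀ H) hfs
    subst hyb
    set β : Path x₀ x := βs.trans εs.symm with hβdef
    have hβα : Quot.mk (WhiskerRel x₀ H) ⟨x, β⟩ =
        Quot.mk (WhiskerRel x₀ H) ⟨x, α⟩ := by
      rw [mk_eq_mk_iff] at hfs ⊢
      have hw : dneg β α = dneg βs (α.trans εs) := by
        unfold dneg
        simp [hβdef, hm_trans, hm_symm, Groupoid.inv_eq_inv, Category.assoc]
      rw [hw]
      exact hfs
    have hfsψ : f s = Quot.mk (WhiskerRel x₀ N) ⟨yb, β.trans εs⟩ := by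
      rw [← hb]
      apply mk_eq_of_hm_eq
      simp [hβdef, hm_trans, hm_symm, Groupoid.inv_eq_inv, Category.assoc]
    set g : unitInterval → WhiskerSpace x₀ N := fun u =>
      if u ≤ s then f u else psiMap N H x α β U (γ u) with hgdef
    have hgs : ∀ u : unitInterval, s ≤ u → u ≤ t → g u = psiMap N H x α β U (γ u) := by
      intro u hsu hut
      by_cases hus : u ≤ s
      · have : u = s := le_antisymm hus hsu
        subst this
        obtain ⟨z, ε', hε', he'⟩ := hinB u le_rfl hut
        have : psiMap N H x α β U (γ u) = Quot.mk (WhiskerRel x₀ N) ⟨z, β.trans ε'⟩ := by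
          rw [he']
          exact psiMap_spec N H x α β U hspan hNnormal ε' hε'
        rw [this]
        simp only [hgdef, if_pos hus]
        rw [hfsψ]
        apply key_welldef' N H x α β U hspan hNnormal εs ε' hεs hε'
        rw [← hγse, ← he']
      · simp only [hgdef, if_neg hus]
    refine ⟨g, ?_, ?_, ?_⟩
    · -- continuity on Icc 0 t
      have hIcc : Set.Icc (0:unitInterval) t = Set.Icc 0 s ∪ Set.Icc s t :=
        (Set.Icc_union_Icc_eq_Icc unitInterval.nonneg' (le_of_lt hts)).symm
      rw [hIcc]
      have hg1 : ContinuousOn g (Set.Icc 0 s) := by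
        apply hf.congr
        intro v hv
        simp only [hgdef, if_pos hv.2]
      have hg2 : ContinuousOn g (Set.Icc s t) := by
        have hψ : ContinuousOn (psiMap N H x α β U ∘ γ) (Set.Icc s t) := by
          apply (psiMap_continuousOn N H x α β U hUopen hspan hNnormal).comp
            γ.continuous.continuousOn
          intro u hu
          exact hinB u hu.1 hu.2
        apply hψ.congr
        intro v hv
        exact hgs v hv.1 hv.2
      intro u hu
      have hcwa1 : ContinuousWithinAt g (Set.Icc 0 s) u := by
        by_cases h : u ∈ Set.Icc (0:unitInterval) s
        · exact hg1 u h
        · exact continuousWithinAt_of_notMem_closure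
            (by rwa [IsClosed.closure_eq isClosed_Icc])
      have hcwa2 : ContinuousWithinAt g (Set.Icc s t) u := by
        by_cases h : u ∈ Set.Icc s t
        · exact hg2 u h
        · exact continuousWithinAt_of_notMem_closure
            (by rwa [IsClosed.closure_eq isClosed_Icc])
      exact hcwa1.union hcwa2
    · simp only [hgdef, if_pos (unitInterval.nonneg' : (0:unitInterval) ≤ s)]
      exact hf0
    · intro u hut
      by_cases hus : u ≤ s
      · simp only [hgdef, if_pos hus]
        exact hfq u hus
      · push_neg at hus
        rw [hgs u (le_of_lt hus) hut]
        obtain ⟨z, ε', hε', he'⟩ := hinB u (le_of_lt hus) hut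
        rw [he', psiMap_spec N H x α β U hspan hNnormal ε' hε', qmap_mk]
        exact mk_trans_congr H ε' hβα
  -- the sup argument
  set S : Set ℝ := {r : ℝ | ∃ hr : r ∈ Set.Icc (0:ℝ) 1, P ⟨r, hr⟩} with hSdef
  have hS0 : (0:ℝ) ∈ S := ⟨⟨le_rfl, zero_le_one⟩, hP0⟩
  have hSb : BddAbove S := ⟨1, fun r hr => hr.choose.2⟩
  set T₀ : ℝ := sSup S with hT₀def
  have hT0mem : T₀ ∈ Set.Icc (0:ℝ) 1 :=
    ⟨le_csSup hSb hS0, csSup_le ⟨0, hS0⟩ fun r hr => hr.choose.2⟩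
  set T : unitInterval := ⟨T₀, hT0mem⟩ with hTdef
  obtain ⟨δ, hδpos, hext'⟩ := hext T
  obtain ⟨s, hsS, hs⟩ := exists_lt_of_lt_csSup ⟨0, hS0⟩
    (show T₀ - δ < T₀ by linarith)
  have hsle : s ≤ T₀ := le_csSup hSb hsS
  obtain ⟨hsI, hPs⟩ := hsS
  have ht1 : min (T₀ + δ / 2) 1 ∈ Set.Icc (0:ℝ) 1 :=
    ⟨le_min (by linarith [hT0mem.1]) zero_le_one, min_le_right _ _⟩
  have hPt : P ⟨min (T₀ + δ / 2) 1, ht1⟩ := by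
    apply hext' ⟨s, hsI⟩ _ hPs
    · exact hsle
    · exact hs
    · exact min_le_left _ _
  have hminS : min (T₀ + δ / 2) 1 ∈ S := ⟨ht1, hPt⟩
  have hminle : min (T₀ + δ / 2) 1 ≤ T₀ := le_csSup hSb hminS
  have hT1 : T₀ = 1 := by
    rcases le_or_gt 1 T₀ with h | h
    · exact le_antisymm hT0mem.2 h
    · exfalso
      have : T₀ < min (T₀ + δ / 2) 1 := lt_min (by linarith) h
      linarith
  have h1 : P 1 := by
    have : (⟨min (T₀ + δ / 2) 1, ht1⟩ : unitInterval) = 1 := by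
      apply Subtype.ext
      show min (T₀ + δ / 2) 1 = 1
      rw [hT1]
      exact min_eq_right (by linarith)
    rwa [this] at hPt
  obtain ⟨f, hf, hf0, hfq⟩ := h1
  refine ⟨f, ?_, hf0, fun t => hfq t unitInterval.le_one'⟩
  have huniv : Set.Icc (0:unitInterval) 1 = Set.univ :=
    Set.eq_univ_of_forall fun u => ⟨unitInterval.nonneg', unitInterval.le_one'⟩
  rw [huniv] at hf
  exact continuousOn_univ.1 hf

end Stmt15

open Stmt15 in
/-- If `N ≤ H ≤ π₁(X,x₀)` with `N` normal, `p_N : X̃_N → X` has the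
unique path lifting property, and every point `x` has an open neighborhood `U` with
`π(x,U) ∩ H ≤ N`, then `p_H : X̃_H → X` has the unique path lifting property. -/
theorem stmt15 {X : Type} [MetricSpace X] [PathConnectedSpace X] (x₀ : X)
    (N H : Subgroup (FundamentalGroup X x₀)) (hNH : N ≤ H) (hNnormal : N.Normal)
    (hN : HasUniquePathLifting (endpointProj x₀ N))
    (hU : ∀ x : X, ∃ U : Set X, IsOpen U ∧ x ∈ U ∧ spanierAt x₀ x U ⊓ H ≤ N) :
    HasUniquePathLifting (endpointProj x₀ H) := by
  intro γ δ h0 hproj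
  obtain ⟨a₀, ha₀⟩ := Quot.exists_rep (γ 0)
  obtain ⟨f, hfc, hf0, hfq⟩ := lift_exists N H hNH hNnormal hU γ a₀ ha₀.symm
  obtain ⟨g, hgc, hg0, hgq⟩ := lift_exists N H hNH hNnormal hU δ a₀
    (by rw [← h0, ← ha₀])
  have hfg : (⟨f, hfc⟩ : C(unitInterval, WhiskerSpace x₀ N)) = ⟨g, hgc⟩ := by
    apply hN
    · show f 0 = g 0
      rw [hf0, hg0]
    · intro t
      show endpointProj x₀ N (f t) = endpointProj x₀ N (g t)
      rw [← endpointProj_qmap N H hNH, ← endpointProj_qmap N H hNH, hfq, hgq]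
      exact hproj t
  ext t
  rw [← hfq t, ← hgq t]
  congr 1
  exact ContinuousMap.congr_fun hfg t
end
end
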